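/- arXiv:2604.21319 — 2 statements merged into one kernel-verified Lean document; each statement's English description precedes it below -/
import Mathlib

section
/- Define the bivariate Mittag-Leffler series E₂(x,y) = ∑_{m=0}^∞ ∑_{n=0}^∞ (γ₁)_{α₁m+β₁n} (γ₂)_{α₂m} x^m y^n / (Γ(δ₁+α₃m+β₂n) Γ(δ₂+α₄m) Γ(δ₃+β₃n)), where (γ)_s = Γ(γ+s)/Γ(γ). If Δ₁ := α₃+α₄-α₁-α₂ > 0 and Δ₂ := β₂+β₃-β₁ > 0, with all of α₁,α₂,α₃,α₄,β₁,β₂,β₃ > 0 except possibly α₂ = 0 is allowed, and γ₁,γ₂,δ₁,δ₂,δ₃ > 0, then the double series converges absolutely for all x, y ∈ ℂ. -/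
/-- Generalized Pochhammer symbol `(γ)_s = Γ(γ+s)/Γ(γ)`. -/
noncomputable def genPoch (γ s : ℝ) : ℝ := Real.Gamma (γ + s) / Real.Gamma γ

/-- The general term of the bivariate Mittag-Leffler double series. -/
noncomputable def E2term (γ₁ α₁ β₁ γ₂ α₂ δ₁ α₃ β₂ δ₂ α₄ δ₃ β₃ : ℝ)
    (x y : ℂ) (p : ℕ × ℕ) : ℂ :=
  ((genPoch γ₁ (α₁ * p.1 + β₁ * p.2) * genPoch γ₂ (α₂ * p.1) : ℝ) : ℂ) *
      x ^ p.1 * y ^ p.2 /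
    ((Real.Gamma (δ₁ + α₃ * p.1 + β₂ * p.2) * Real.Gamma (δ₂ + α₄ * p.1) *
        Real.Gamma (δ₃ + β₃ * p.2) : ℝ) : ℂ)

open Real Filter Topology

lemma Gamma_nat_shift_le (x : ℝ) (hx : 0 < x) (n : ℕ) :
    Real.Gamma (x + n) ≤ Real.Gamma x * (x + n) ^ n := by
  induction n with
  | zero => simp
  | succ n ih =>
    have hxn : (0:ℝ) < x + n := by positivity
    have h1 : Real.Gamma (x + (n+1:ℕ)) = (x + n) * Real.Gamma (x + n) := by
      push_cast
      rw [show x + ((n:ℝ)+1) = (x + n) + 1 by ring, Real.Gamma_add_one hxn.ne']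
    rw [h1]
    have h2 : (x + n) * Real.Gamma (x + n) ≤ (x+n) * (Real.Gamma x * (x + n) ^ n) :=
      mul_le_mul_of_nonneg_left ih hxn.le
    refine h2.trans ?_
    have h3 : (x+n) * (Real.Gamma x * (x + n) ^ n) = Real.Gamma x * (x+n)^(n+1) := by ring
    rw [h3]
    push_cast
    have hg := (Real.Gamma_pos_of_pos hx).le
    have hp : (x+(n:ℝ))^(n+1) ≤ (x+(n:ℝ)+1)^(n+1) := by
      apply pow_le_pow_left₀ hxn.le; linarith
    calc Real.Gamma x * (x+(n:ℝ))^(n+1) ≤ Real.Gamma x * (x+(n:ℝ)+1)^(n+1) :=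
          mul_le_mul_of_nonneg_left hp hg
    _ = Real.Gamma x * (x+((n:ℝ)+1))^(n+1) := by ring_nf

lemma Gamma_nat_shift_ge (x : ℝ) (hx : 0 < x) (n : ℕ) :
    Real.Gamma x * x ^ n ≤ Real.Gamma (x + n) := by
  induction n with
  | zero => simp
  | succ n ih =>
    have hxn : (0:ℝ) < x + n := by positivity
    have h1 : Real.Gamma (x + (n+1:ℕ)) = (x + n) * Real.Gamma (x + n) := by
      push_cast
      rw [show x + ((n:ℝ)+1) = (x + n) + 1 by ring, Real.Gamma_add_one hxn.ne']
    rw [h1, pow_succ]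
    calc Real.Gamma x * (x ^ n * x) = x * (Real.Gamma x * x ^ n) := by ring
    _ ≤ (x + n) * (Real.Gamma x * x ^ n) := by
        have : (0:ℝ) ≤ Real.Gamma x * x ^ n := by
          have := Real.Gamma_pos_of_pos hx; positivity
        nlinarith [this, Nat.cast_nonneg (α := ℝ) n]
    _ ≤ (x + n) * Real.Gamma (x + n) := mul_le_mul_of_nonneg_left ih hxn.le

lemma Gamma_ratio_upper (x a : ℝ) (hx : 0 < x) (ha : 0 ≤ a) :
    Real.Gamma (x + a) ≤ Real.Gamma x * (x + a + 1) ^ a := by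
  have hG := Real.Gamma_pos_of_pos hx
  rcases ha.eq_or_lt with h0 | ha'
  · subst h0; simp
  set n : ℕ := ⌈a⌉₊ with hn
  have han : a ≤ n := Nat.le_ceil a
  have hn1 : (n:ℝ) < a + 1 := Nat.ceil_lt_add_one ha
  have hxn : (0:ℝ) < x + n := by positivity
  have hbase : Real.Gamma (x + n) ≤ Real.Gamma x * (x + n) ^ n := Gamma_nat_shift_le x hx n
  have hmono : Real.Gamma x * (x + n) ^ (a:ℝ) ≤ Real.Gamma x * (x + a + 1) ^ (a:ℝ) := by
    apply mul_le_mul_of_nonneg_left _ hG.le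
    apply Real.rpow_le_rpow hxn.le (by linarith) ha
  rcases eq_or_lt_of_le han with heq | hlt
  · refine le_trans ?_ hmono
    rw [heq, Real.rpow_natCast]
    exact hbase
  · have hnpos : (0:ℝ) < n := lt_of_lt_of_le ha' han
    set l : ℝ := ((n:ℝ) - a)/n with hl
    have hl0 : 0 < l := by apply div_pos (by linarith) hnpos
    have hb0 : 0 < a/(n:ℝ) := div_pos ha' hnpos
    have hlab : l + a/(n:ℝ) = 1 := by
      rw [hl]; field_simp; ring
    have hconv := Real.Gamma_mul_add_mul_le_rpow_Gamma_mul_rpow_Gamma hx hxn hl0 hb0 hlab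
    have harg : l * x + a/(n:ℝ) * (x + n) = x + a := by
      have h' : l * x + a/(n:ℝ) * (x + n) = (l + a/(n:ℝ)) * x + a/(n:ℝ) * n := by ring
      rw [h', hlab, one_mul, div_mul_cancel₀ a hnpos.ne']
    rw [harg] at hconv
    refine hconv.trans (le_trans ?_ hmono)
    have h2 : Real.Gamma (x+n) ^ (a/(n:ℝ)) ≤ (Real.Gamma x * (x + n) ^ n) ^ (a/(n:ℝ)) :=
      Real.rpow_le_rpow (Real.Gamma_pos_of_pos hxn).le hbase hb0.le
    have h3 : (Real.Gamma x * (x + n) ^ n) ^ (a/(n:ℝ))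
        = Real.Gamma x ^ (a/(n:ℝ)) * (x+n) ^ (a:ℝ) := by
      rw [Real.mul_rpow hG.le (by positivity), ← Real.rpow_natCast (x+n) n,
        ← Real.rpow_mul hxn.le]
      congr 1
      field_simp
    calc Real.Gamma x ^ l * Real.Gamma (x+n) ^ (a/(n:ℝ))
        ≤ Real.Gamma x ^ l * (Real.Gamma x ^ (a/(n:ℝ)) * (x+n) ^ (a:ℝ)) := by
          rw [← h3]; exact mul_le_mul_of_nonneg_left h2 (by positivity)
      _ = Real.Gamma x ^ (l + a/(n:ℝ)) * (x+n) ^ (a:ℝ) := by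
          rw [Real.rpow_add hG]; ring
      _ = Real.Gamma x * (x+n) ^ (a:ℝ) := by rw [hlab, Real.rpow_one]

lemma Gamma_ratio_lower (x a : ℝ) (hx : 1 ≤ x) (ha : 0 ≤ a) :
    Real.Gamma x * x ^ a ≤ Real.Gamma (x + a) * (1 + a) := by
  have hx0 : (0:ℝ) < x := lt_of_lt_of_le one_pos hx
  have hG := Real.Gamma_pos_of_pos hx0
  have hGxa := Real.Gamma_pos_of_pos (show (0:ℝ) < x + a by linarith)
  rcases ha.eq_or_lt with h0 | ha'
  · subst h0; simp
  set n : ℕ := ⌈a⌉₊ with hn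
  have han : a ≤ n := Nat.le_ceil a
  have hn1 : (n:ℝ) < a + 1 := Nat.ceil_lt_add_one ha
  have hxn : (0:ℝ) < x + n := by positivity
  have hbase : Real.Gamma x * x ^ n ≤ Real.Gamma (x + n) := Gamma_nat_shift_ge x hx0 n
  rcases eq_or_lt_of_le han with heq | hlt
  · have h1 : Real.Gamma x * x ^ (a:ℝ) ≤ Real.Gamma (x + a) := by
      rw [heq, Real.rpow_natCast]; exact hbase
    nlinarith
  · -- a < n < a + 1
    set l : ℝ := a + 1 - n with hl
    have hl0 : 0 < l := by rw [hl]; linarith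
    have hb0 : 0 < (n:ℝ) - a := by linarith
    have hlab : l + ((n:ℝ) - a) = 1 := by rw [hl]; ring
    have hxa : (0:ℝ) < x + a := by linarith
    have hxa1 : (0:ℝ) < x + a + 1 := by linarith
    have hconv := Real.Gamma_mul_add_mul_le_rpow_Gamma_mul_rpow_Gamma hxa hxa1 hl0 hb0 hlab
    have harg : l * (x+a) + ((n:ℝ) - a) * (x + a + 1) = x + n := by
      have : l * (x+a) + ((n:ℝ)-a) * (x+a+1) = (l + ((n:ℝ)-a)) * (x+a) + ((n:ℝ)-a) := by ring
      rw [this, hlab]; ring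
    rw [harg] at hconv
    have hrec : Real.Gamma (x + a + 1) = (x+a) * Real.Gamma (x+a) := by
      exact Real.Gamma_add_one hxa.ne'
    -- hconv : Γ(x+n) ≤ Γ(x+a)^l * ((x+a)Γ(x+a))^(n-a) = Γ(x+a) * (x+a)^(n-a)
    have hc2 : Real.Gamma (x+n) ≤ Real.Gamma (x+a) * (x+a) ^ ((n:ℝ) - a) := by
      refine hconv.trans ?_
      rw [hrec, Real.mul_rpow hxa.le hGxa.le, ← mul_assoc,
        show Real.Gamma (x+a) ^ l * (x+a) ^ ((n:ℝ)-a) * Real.Gamma (x+a) ^ ((n:ℝ)-a)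
          = Real.Gamma (x+a) ^ l * Real.Gamma (x+a) ^ ((n:ℝ)-a) * (x+a) ^ ((n:ℝ)-a) by ring,
        ← Real.rpow_add hGxa, hlab, Real.rpow_one]
    -- key numeric ineq : x^a * (x+a)^(n-a) ≤ x^n * (1+a)
    have hkey : x ^ (a:ℝ) * (x+a) ^ ((n:ℝ) - a) ≤ x ^ ((n:ℝ):ℝ) * (1 + a) := by
      have h4 : (x + a) ≤ x * (1 + a) := by nlinarith
      have h5 : (x+a) ^ ((n:ℝ)-a) ≤ (x * (1+a)) ^ ((n:ℝ)-a) :=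
        Real.rpow_le_rpow hxa.le h4 hb0.le
      have h6 : (x * (1+a)) ^ ((n:ℝ)-a) = x ^ ((n:ℝ)-a) * (1+a) ^ ((n:ℝ)-a) :=
        Real.mul_rpow hx0.le (by linarith)
      have h7 : (1+a) ^ ((n:ℝ)-a) ≤ (1+a) ^ (1:ℝ) :=
        Real.rpow_le_rpow_of_exponent_le (by linarith) (by linarith)
      calc x ^ (a:ℝ) * (x+a) ^ ((n:ℝ)-a) ≤ x ^ (a:ℝ) * (x ^ ((n:ℝ)-a) * (1+a)^(1:ℝ)) := by
            have := (h5.trans_eq h6).trans (mul_le_mul_of_nonneg_left h7 (by positivity))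
            exact mul_le_mul_of_nonneg_left this (by positivity)
        _ = x ^ ((a:ℝ) + ((n:ℝ)-a)) * (1+a) := by
            rw [Real.rpow_add hx0, Real.rpow_one]; ring
        _ = x ^ ((n:ℝ):ℝ) * (1+a) := by ring_nf
    -- combine
    have hcn : (0:ℝ) < (x+a) ^ ((n:ℝ)-a) := Real.rpow_pos_of_pos hxa _
    have H1 : Real.Gamma x * x ^ (a:ℝ) * (x+a) ^ ((n:ℝ)-a)
        ≤ Real.Gamma x * (x ^ ((n:ℝ):ℝ) * (1+a)) := by
      rw [mul_assoc]
      exact mul_le_mul_of_nonneg_left hkey hG.le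
    have H2 : Real.Gamma x * x ^ ((n:ℝ):ℝ) ≤ Real.Gamma (x+a) * (x+a) ^ ((n:ℝ)-a) := by
      rw [Real.rpow_natCast]
      exact hbase.trans hc2
    have H3 : Real.Gamma x * x ^ (a:ℝ) * (x+a) ^ ((n:ℝ)-a)
        ≤ Real.Gamma (x+a) * (1+a) * (x+a) ^ ((n:ℝ)-a) := by
      refine H1.trans ?_
      have : Real.Gamma x * (x ^ ((n:ℝ):ℝ) * (1+a)) = (Real.Gamma x * x ^ ((n:ℝ):ℝ)) * (1+a) := by ring
      rw [this]
      have h8 : (Real.Gamma x * x ^ ((n:ℝ):ℝ)) * (1+a) ≤ (Real.Gamma (x+a) * (x+a) ^ ((n:ℝ)-a)) * (1+a) :=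
        mul_le_mul_of_nonneg_right H2 (by linarith)
      refine h8.trans_eq ?_
      ring
    exact le_of_mul_le_mul_right H3 hcn

lemma Gamma_superadd (c u v : ℝ) (hc : 0 < c) (hu : 0 ≤ u) (hv : 0 ≤ v) :
    Real.Gamma (c + u) * Real.Gamma (c + v) ≤ Real.Gamma c * Real.Gamma (c + u + v) := by
  have hG := Real.Gamma_pos_of_pos hc
  rcases hu.eq_or_lt with h0 | hu'
  · subst h0; simp [add_zero]
  rcases hv.eq_or_lt with h0 | hv'
  · subst h0
    rw [add_zero, add_zero, mul_comm]
  have huv : (0:ℝ) < u + v := by linarith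
  have hGuv := Real.Gamma_pos_of_pos (show (0:ℝ) < c + u + v by linarith)
  set l : ℝ := v / (u+v) with hl
  set m : ℝ := u / (u+v) with hm
  have hl0 : 0 < l := div_pos hv' huv
  have hm0 : 0 < m := div_pos hu' huv
  have hlm : l + m = 1 := by rw [hl, hm]; field_simp; ring
  have hml : m + l = 1 := by linarith
  have h1 := Real.Gamma_mul_add_mul_le_rpow_Gamma_mul_rpow_Gamma hc
    (show (0:ℝ) < c + u + v by linarith) hl0 hm0 hlm
  have h2 := Real.Gamma_mul_add_mul_le_rpow_Gamma_mul_rpow_Gamma hc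
    (show (0:ℝ) < c + u + v by linarith) hm0 hl0 hml
  have harg1 : l * c + m * (c + u + v) = c + u := by
    have : l * c + m * (c+u+v) = (l+m) * c + m * (u+v) := by ring
    rw [this, hlm, one_mul, hm, div_mul_cancel₀ u huv.ne']
  have harg2 : m * c + l * (c + u + v) = c + v := by
    have : m * c + l * (c+u+v) = (m+l) * c + l * (u+v) := by ring
    rw [this, hml, one_mul, hl, div_mul_cancel₀ v huv.ne']
  rw [harg1] at h1; rw [harg2] at h2
  calc Real.Gamma (c+u) * Real.Gamma (c+v)
      ≤ (Real.Gamma c ^ l * Real.Gamma (c+u+v) ^ m) *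
        (Real.Gamma c ^ m * Real.Gamma (c+u+v) ^ l) := by
        apply mul_le_mul h1 h2 (Real.Gamma_pos_of_pos (by linarith : (0:ℝ) < c + v)).le
        positivity
    _ = (Real.Gamma c ^ l * Real.Gamma c ^ m) * (Real.Gamma (c+u+v) ^ m * Real.Gamma (c+u+v) ^ l) := by
        ring
    _ = Real.Gamma c * Real.Gamma (c + u + v) := by
        rw [← Real.rpow_add hG, ← Real.rpow_add hGuv, hlm, hml, Real.rpow_one, Real.rpow_one]

lemma aux_summable (c₁ c₂ d₁ d₂ a₁ a₂ b₁ b₂ r : ℝ)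
    (hc₁ : 0 < c₁) (hc₂ : 0 < c₂) (hd₁ : 0 < d₁) (hd₂ : 0 < d₂)
    (ha₁ : 0 ≤ a₁) (ha₂ : 0 ≤ a₂) (hb₁ : 0 < b₁) (hb₂ : 0 < b₂)
    (hr : 0 ≤ r) (hΔ : a₁ / 2 + a₂ < b₁ + b₂) :
    Summable (fun m : ℕ =>
      Real.Gamma (c₁ + a₁ * m) ^ (1/2 : ℝ) * Real.Gamma (c₂ + a₂ * m) * r ^ m /
        (Real.Gamma (d₁ + b₁ * m) * Real.Gamma (d₂ + b₂ * m))) := by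
  have hA1 : ∀ m : ℕ, (0:ℝ) < c₁ + a₁ * m := fun m => by positivity
  have hA2 : ∀ m : ℕ, (0:ℝ) < c₂ + a₂ * m := fun m => by positivity
  have hB1 : ∀ m : ℕ, (0:ℝ) < d₁ + b₁ * m := fun m => by positivity
  have hB2 : ∀ m : ℕ, (0:ℝ) < d₂ + b₂ * m := fun m => by positivity
  set N : ℕ → ℝ := fun m =>
    Real.Gamma (c₁ + a₁ * m) ^ (1/2 : ℝ) * Real.Gamma (c₂ + a₂ * m) * r ^ m with hN
  set D : ℕ → ℝ := fun m => Real.Gamma (d₁ + b₁ * m) * Real.Gamma (d₂ + b₂ * m) with hD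
  have hNnn : ∀ m, 0 ≤ N m := fun m => by
    have h1 := Real.Gamma_pos_of_pos (hA1 m); have h2 := Real.Gamma_pos_of_pos (hA2 m)
    simp only [hN]; positivity
  have hDpos : ∀ m, 0 < D m := fun m =>
    mul_pos (Real.Gamma_pos_of_pos (hB1 m)) (Real.Gamma_pos_of_pos (hB2 m))
  have hFnn : ∀ m, 0 ≤ N m / D m := fun m => div_nonneg (hNnn m) (hDpos m).le
  set U : ℕ → ℝ := fun m =>
    (c₁ + a₁ * m + a₁ + 1) ^ (a₁/2 : ℝ) * (c₂ + a₂ * m + a₂ + 1) ^ (a₂ : ℝ) * r with hU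
  set L : ℕ → ℝ := fun m => (d₁ + b₁ * m) ^ (b₁ : ℝ) * (d₂ + b₂ * m) ^ (b₂ : ℝ) with hL
  set K : ℝ := (1 + b₁) * (1 + b₂) with hK
  have hKpos : 0 < K := by positivity
  have hUnn : ∀ m, 0 ≤ U m := fun m => by simp only [hU]; positivity
  have hLpos : ∀ m, 0 < L m := fun m => by simp only [hL]; positivity
  set ρ : ℕ → ℝ := fun m => U m * K / L m with hρ
  -- Step 1 : the one-step ratio bound
  have hstep : ∀ m : ℕ, 1 ≤ d₁ + b₁ * m → 1 ≤ d₂ + b₂ * m →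
      N (m+1) / D (m+1) ≤ ρ m * (N m / D m) := by
    intro m hm1 hm2
    have cast1 : ((m+1 : ℕ) : ℝ) = (m:ℝ) + 1 := by push_cast; ring
    have e₁ : c₁ + a₁ * ((m:ℝ)+1) = (c₁ + a₁*m) + a₁ := by ring
    have e₂ : c₂ + a₂ * ((m:ℝ)+1) = (c₂ + a₂*m) + a₂ := by ring
    have e₃ : d₁ + b₁ * ((m:ℝ)+1) = (d₁ + b₁*m) + b₁ := by ring
    have e₄ : d₂ + b₂ * ((m:ℝ)+1) = (d₂ + b₂*m) + b₂ := by ring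
    have hg1 := Real.Gamma_pos_of_pos (hA1 m)
    have hg2 := Real.Gamma_pos_of_pos (hA2 m)
    have hg3 := Real.Gamma_pos_of_pos (hB1 m)
    have hg4 := Real.Gamma_pos_of_pos (hB2 m)
    have hX1 : (0:ℝ) < c₁ + a₁*m + a₁ + 1 := by positivity
    -- numerator bound
    have g1 : Real.Gamma ((c₁ + a₁*m) + a₁) ^ (1/2:ℝ)
        ≤ Real.Gamma (c₁ + a₁*m) ^ (1/2:ℝ) * (c₁ + a₁*m + a₁ + 1) ^ (a₁/2 : ℝ) := by
      have h := Gamma_ratio_upper (c₁ + a₁*m) a₁ (hA1 m) ha₁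
      have hpos : (0:ℝ) < Real.Gamma ((c₁ + a₁*m) + a₁) :=
        Real.Gamma_pos_of_pos (by positivity)
      calc Real.Gamma ((c₁ + a₁*m) + a₁) ^ (1/2:ℝ)
          ≤ (Real.Gamma (c₁ + a₁*m) * (c₁ + a₁*m + a₁ + 1) ^ (a₁:ℝ)) ^ (1/2:ℝ) :=
            Real.rpow_le_rpow hpos.le h (by norm_num)
        _ = Real.Gamma (c₁ + a₁*m) ^ (1/2:ℝ) * (c₁ + a₁*m + a₁ + 1) ^ (a₁/2 : ℝ) := by
            rw [Real.mul_rpow hg1.le (Real.rpow_nonneg hX1.le _), ← Real.rpow_mul hX1.le,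
              show (a₁ * (1/2) : ℝ) = a₁/2 by ring]
    have g2 : Real.Gamma ((c₂ + a₂*m) + a₂)
        ≤ Real.Gamma (c₂ + a₂*m) * (c₂ + a₂*m + a₂ + 1) ^ (a₂ : ℝ) :=
      Gamma_ratio_upper (c₂ + a₂*m) a₂ (hA2 m) ha₂
    have hNstep : N (m+1) ≤ U m * N m := by
      simp only [hN, hU, cast1, e₁, e₂]
      have hrp : r ^ (m+1) = r ^ m * r := pow_succ r m
      rw [hrp]
      calc Real.Gamma ((c₁ + a₁*m) + a₁) ^ (1/2:ℝ) * Real.Gamma ((c₂ + a₂*m) + a₂) * (r^m * r)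
          ≤ (Real.Gamma (c₁ + a₁*m) ^ (1/2:ℝ) * (c₁ + a₁*m + a₁ + 1) ^ (a₁/2 : ℝ))
              * (Real.Gamma (c₂ + a₂*m) * (c₂ + a₂*m + a₂ + 1) ^ (a₂ : ℝ)) * (r^m * r) := by
            have hnn1 : (0:ℝ) ≤ Real.Gamma ((c₂ + a₂*m) + a₂) :=
              (Real.Gamma_pos_of_pos (by positivity)).le
            apply mul_le_mul_of_nonneg_right _ (by positivity)
            exact mul_le_mul g1 g2 hnn1 (by positivity)
        _ = (c₁ + a₁*m + a₁ + 1) ^ (a₁/2 : ℝ) * (c₂ + a₂*m + a₂ + 1) ^ (a₂ : ℝ) * r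
              * (Real.Gamma (c₁ + a₁*m) ^ (1/2:ℝ) * Real.Gamma (c₂ + a₂*m) * r^m) := by ring
    -- denominator bound
    have g3 : Real.Gamma (d₁ + b₁*m) * (d₁ + b₁*m) ^ (b₁:ℝ)
        ≤ Real.Gamma ((d₁ + b₁*m) + b₁) * (1 + b₁) :=
      Gamma_ratio_lower (d₁ + b₁*m) b₁ hm1 hb₁.le
    have g4 : Real.Gamma (d₂ + b₂*m) * (d₂ + b₂*m) ^ (b₂:ℝ)
        ≤ Real.Gamma ((d₂ + b₂*m) + b₂) * (1 + b₂) :=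
      Gamma_ratio_lower (d₂ + b₂*m) b₂ hm2 hb₂.le
    have hDstep : D m * L m ≤ D (m+1) * K := by
      simp only [hD, hL, hK, cast1, e₃, e₄]
      calc Real.Gamma (d₁ + b₁*m) * Real.Gamma (d₂ + b₂*m)
            * ((d₁ + b₁*m) ^ (b₁:ℝ) * (d₂ + b₂*m) ^ (b₂:ℝ))
          = (Real.Gamma (d₁ + b₁*m) * (d₁ + b₁*m) ^ (b₁:ℝ))
            * (Real.Gamma (d₂ + b₂*m) * (d₂ + b₂*m) ^ (b₂:ℝ)) := by ring
        _ ≤ (Real.Gamma ((d₁ + b₁*m) + b₁) * (1 + b₁))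
            * (Real.Gamma ((d₂ + b₂*m) + b₂) * (1 + b₂)) := by
            apply mul_le_mul g3 g4 (by positivity) _
            have := Real.Gamma_pos_of_pos (show (0:ℝ) < (d₁+b₁*m)+b₁ by positivity)
            positivity
        _ = Real.Gamma ((d₁ + b₁*m) + b₁) * Real.Gamma ((d₂ + b₂*m) + b₂) * ((1+b₁)*(1+b₂)) := by
            ring
    -- combine
    have hD'pos := hDpos (m+1)
    have hρF : ρ m * (N m / D m) = U m * K * N m / (L m * D m) := by
      rw [hρ]
      rw [div_mul_div_comm]
    rw [hρF, div_le_div_iff₀ hD'pos (mul_pos (hLpos m) (hDpos m))]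
    have h9 : U m * (D m * L m) ≤ U m * (D (m+1) * K) :=
      mul_le_mul_of_nonneg_left hDstep (hUnn m)
    have h10 : N (m+1) * (L m * D m) ≤ (U m * N m) * (L m * D m) :=
      mul_le_mul_of_nonneg_right hNstep (mul_pos (hLpos m) (hDpos m)).le
    have h11 : (U m * N m) * (L m * D m) = (N m * (U m * (D m * L m))) := by ring
    have h12 : N m * (U m * (D m * L m)) ≤ N m * (U m * (D (m+1) * K)) :=
      mul_le_mul_of_nonneg_left h9 (hNnn m)
    calc N (m+1) * (L m * D m) ≤ N m * (U m * (D (m+1) * K)) := by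
          rw [← h11] at h12; exact h10.trans h12
      _ = U m * K * N m * D (m+1) := by ring
  -- Step 2 : ρ is eventually ≤ 1/2
  set Δ : ℝ := b₁ + b₂ - (a₁/2 + a₂) with hΔdef
  have hΔpos : 0 < Δ := by rw [hΔdef]; linarith
  set Kbig : ℝ := (a₁ + c₁ + a₁ + 1) ^ (a₁/2:ℝ) * (a₂ + c₂ + a₂ + 1) ^ (a₂:ℝ) * r * K
      * (b₁ ^ (b₁:ℝ) * b₂ ^ (b₂:ℝ))⁻¹ with hKbig
  have hρle : ∀ m : ℕ, 1 ≤ (m:ℝ) → ρ m ≤ Kbig * (m:ℝ) ^ (-Δ) := by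
    intro m hm
    have hm0 : (0:ℝ) < m := lt_of_lt_of_le one_pos hm
    have hu1 : (c₁ + a₁ * m + a₁ + 1) ^ (a₁/2:ℝ)
        ≤ ((a₁ + c₁ + a₁ + 1) * m) ^ (a₁/2:ℝ) := by
      apply Real.rpow_le_rpow (by positivity) _ (by positivity)
      nlinarith
    have hu2 : (c₂ + a₂ * m + a₂ + 1) ^ (a₂:ℝ) ≤ ((a₂ + c₂ + a₂ + 1) * m) ^ (a₂:ℝ) := by
      apply Real.rpow_le_rpow (by positivity) _ ha₂
      nlinarith
    have hl1 : (b₁ * m) ^ (b₁:ℝ) ≤ (d₁ + b₁ * m) ^ (b₁:ℝ) := by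
      apply Real.rpow_le_rpow (by positivity) (by linarith) hb₁.le
    have hl2 : (b₂ * m) ^ (b₂:ℝ) ≤ (d₂ + b₂ * m) ^ (b₂:ℝ) := by
      apply Real.rpow_le_rpow (by positivity) (by linarith) hb₂.le
    have hLlow : (b₁*m) ^ (b₁:ℝ) * (b₂*m) ^ (b₂:ℝ) ≤ L m :=
      mul_le_mul hl1 hl2 (by positivity) (by positivity)
    have hLlowpos : (0:ℝ) < (b₁*m) ^ (b₁:ℝ) * (b₂*m) ^ (b₂:ℝ) := by positivity
    have hnum : U m * K ≤ (a₁ + c₁ + a₁ + 1) ^ (a₁/2:ℝ) * (m:ℝ)^(a₁/2:ℝ)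
        * ((a₂ + c₂ + a₂ + 1) ^ (a₂:ℝ) * (m:ℝ)^(a₂:ℝ)) * r * K := by
      have e1 : ((a₁ + c₁ + a₁ + 1) * m) ^ (a₁/2:ℝ)
          = (a₁ + c₁ + a₁ + 1) ^ (a₁/2:ℝ) * (m:ℝ)^(a₁/2:ℝ) :=
        Real.mul_rpow (by positivity) (by positivity)
      have e2 : ((a₂ + c₂ + a₂ + 1) * m) ^ (a₂:ℝ)
          = (a₂ + c₂ + a₂ + 1) ^ (a₂:ℝ) * (m:ℝ)^(a₂:ℝ) :=
        Real.mul_rpow (by positivity) (by positivity)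
      rw [← e1, ← e2]
      simp only [hU]
      apply mul_le_mul_of_nonneg_right _ hKpos.le
      apply mul_le_mul_of_nonneg_right _ hr
      exact mul_le_mul hu1 hu2 (by positivity) (by positivity)
    have hdiv : ρ m ≤ ((a₁ + c₁ + a₁ + 1) ^ (a₁/2:ℝ) * (m:ℝ)^(a₁/2:ℝ)
        * ((a₂ + c₂ + a₂ + 1) ^ (a₂:ℝ) * (m:ℝ)^(a₂:ℝ)) * r * K)
        / ((b₁*m) ^ (b₁:ℝ) * (b₂*m) ^ (b₂:ℝ)) := by
      rw [hρ]
      exact div_le_div₀ (by positivity) hnum hLlowpos hLlow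
    refine hdiv.trans ?_
    -- now pure rpow algebra
    have eb1 : (b₁*(m:ℝ)) ^ (b₁:ℝ) = b₁ ^ (b₁:ℝ) * (m:ℝ)^(b₁:ℝ) :=
      Real.mul_rpow hb₁.le (by positivity)
    have eb2 : (b₂*(m:ℝ)) ^ (b₂:ℝ) = b₂ ^ (b₂:ℝ) * (m:ℝ)^(b₂:ℝ) :=
      Real.mul_rpow hb₂.le (by positivity)
    rw [eb1, eb2]
    have emm : (m:ℝ)^(a₁/2:ℝ) * (m:ℝ)^(a₂:ℝ) / ((m:ℝ)^(b₁:ℝ) * (m:ℝ)^(b₂:ℝ))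
        = (m:ℝ) ^ (-Δ) := by
      rw [← Real.rpow_add hm0, ← Real.rpow_add hm0, ← Real.rpow_sub hm0, hΔdef]
      ring_nf
    apply le_of_eq
    rw [hKbig, ← emm]
    have hb1p : (0:ℝ) < b₁ ^ (b₁:ℝ) := Real.rpow_pos_of_pos hb₁ _
    have hb2p : (0:ℝ) < b₂ ^ (b₂:ℝ) := Real.rpow_pos_of_pos hb₂ _
    have hm1p : (0:ℝ) < (m:ℝ) ^ (b₁:ℝ) := Real.rpow_pos_of_pos hm0 _
    have hm2p : (0:ℝ) < (m:ℝ) ^ (b₂:ℝ) := Real.rpow_pos_of_pos hm0 _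
    field_simp
  -- tendsto of the majorant
  have htend : Tendsto (fun m : ℕ => Kbig * (m:ℝ) ^ (-Δ)) atTop (𝓝 0) := by
    have h := (tendsto_rpow_neg_atTop hΔpos).comp
      (tendsto_natCast_atTop_atTop (R := ℝ))
    simpa using h.const_mul Kbig
  have hev : ∀ᶠ m : ℕ in atTop, ρ m ≤ 1/2 := by
    have h1 : ∀ᶠ m : ℕ in atTop, Kbig * (m:ℝ) ^ (-Δ) < 1/2 :=
      htend.eventually_lt_const (by norm_num)
    have h2 : ∀ᶠ m : ℕ in atTop, 1 ≤ (m:ℝ) := by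
      filter_upwards [eventually_ge_atTop 1] with m hm
      exact_mod_cast hm
    filter_upwards [h1, h2] with m hm1 hm2
    exact (hρle m hm2).trans hm1.le
  -- eventual hypotheses for hstep
  have hev1 : ∀ᶠ m : ℕ in atTop, 1 ≤ d₁ + b₁ * m := by
    have ht : Tendsto (fun m : ℕ => d₁ + b₁ * (m:ℝ)) atTop atTop :=
      tendsto_atTop_add_const_left _ d₁
        ((tendsto_natCast_atTop_atTop (R := ℝ)).const_mul_atTop hb₁)
    exact ht.eventually_ge_atTop 1
  have hev2 : ∀ᶠ m : ℕ in atTop, 1 ≤ d₂ + b₂ * m := by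
    have ht : Tendsto (fun m : ℕ => d₂ + b₂ * (m:ℝ)) atTop atTop :=
      tendsto_atTop_add_const_left _ d₂
        ((tendsto_natCast_atTop_atTop (R := ℝ)).const_mul_atTop hb₂)
    exact ht.eventually_ge_atTop 1
  -- ratio test
  apply summable_of_ratio_norm_eventually_le (r := 1/2) (by norm_num)
  filter_upwards [hev, hev1, hev2] with m hm hm1 hm2
  have h1 := hstep m hm1 hm2
  have h2 : ρ m * (N m / D m) ≤ (1/2) * (N m / D m) :=
    mul_le_mul_of_nonneg_right hm (hFnn m)
  rw [Real.norm_of_nonneg (hFnn (m+1)), Real.norm_of_nonneg (hFnn m)]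
  exact h1.trans h2

/-- Lemma 3: under `Δ₁ = α₃+α₄-α₁-α₂ > 0` and `Δ₂ = β₂+β₃-β₁ > 0`
the bivariate Mittag-Leffler double series converges absolutely for all `x y : ℂ`. -/
theorem E2_converges_absolutely (γ₁ α₁ β₁ γ₂ α₂ δ₁ α₃ β₂ δ₂ α₄ δ₃ β₃ : ℝ)
    (hγ₁ : 0 < γ₁) (hγ₂ : 0 < γ₂) (hδ₁ : 0 < δ₁) (hδ₂ : 0 < δ₂) (hδ₃ : 0 < δ₃)
    (hα₁ : 0 < α₁) (hα₂ : 0 ≤ α₂) (hα₃ : 0 < α₃) (hα₄ : 0 < α₄)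
    (hβ₁ : 0 < β₁) (hβ₂ : 0 < β₂) (hβ₃ : 0 < β₃)
    (hΔ₁ : 0 < α₃ + α₄ - α₁ - α₂) (hΔ₂ : 0 < β₂ + β₃ - β₁) :
    ∀ x y : ℂ,
      Summable (fun p : ℕ × ℕ =>
        ‖E2term γ₁ α₁ β₁ γ₂ α₂ δ₁ α₃ β₂ δ₂ α₄ δ₃ β₃ x y p‖) := by
  intro x y
  have SF : Summable (fun m : ℕ =>
      Real.Gamma (γ₁ + 2*α₁ * m) ^ (1/2 : ℝ) * Real.Gamma (γ₂ + α₂ * m) * ‖x‖ ^ m /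
        (Real.Gamma (δ₁ + α₃ * m) * Real.Gamma (δ₂ + α₄ * m))) :=
    aux_summable γ₁ γ₂ δ₁ δ₂ (2*α₁) α₂ α₃ α₄ ‖x‖ hγ₁ hγ₂ hδ₁ hδ₂ (by linarith) hα₂
      hα₃ hα₄ (norm_nonneg x) (by linarith)
  have SG : Summable (fun n : ℕ =>
      Real.Gamma (γ₁ + 2*β₁ * n) ^ (1/2 : ℝ) * Real.Gamma (1 + 0 * n) * ‖y‖ ^ n /
        (Real.Gamma (δ₁ + β₂ * n) * Real.Gamma (δ₃ + β₃ * n))) :=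
    aux_summable γ₁ 1 δ₁ δ₃ (2*β₁) 0 β₂ β₃ ‖y‖ hγ₁ one_pos hδ₁ hδ₃ (by linarith)
      le_rfl hβ₂ hβ₃ (norm_nonneg y) (by linarith)
  set F : ℕ → ℝ := fun m =>
      Real.Gamma (γ₁ + 2*α₁ * m) ^ (1/2 : ℝ) * Real.Gamma (γ₂ + α₂ * m) * ‖x‖ ^ m /
        (Real.Gamma (δ₁ + α₃ * m) * Real.Gamma (δ₂ + α₄ * m)) with hF
  set G : ℕ → ℝ := fun n =>
      Real.Gamma (γ₁ + 2*β₁ * n) ^ (1/2 : ℝ) * Real.Gamma (1 + 0 * n) * ‖y‖ ^ n /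
        (Real.Gamma (δ₁ + β₂ * n) * Real.Gamma (δ₃ + β₃ * n)) with hG
  have hFnn : ∀ m, 0 ≤ F m := by
    intro m
    have h1 := Real.Gamma_pos_of_pos (show (0:ℝ) < γ₁ + 2*α₁*m by positivity)
    have h2 := Real.Gamma_pos_of_pos (show (0:ℝ) < γ₂ + α₂*m by positivity)
    have h3 := Real.Gamma_pos_of_pos (show (0:ℝ) < δ₁ + α₃*m by positivity)
    have h4 := Real.Gamma_pos_of_pos (show (0:ℝ) < δ₂ + α₄*m by positivity)
    rw [hF]; positivity
  have hGnn : ∀ n, 0 ≤ G n := by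
    intro n
    have h1 := Real.Gamma_pos_of_pos (show (0:ℝ) < γ₁ + 2*β₁*n by positivity)
    have h2 := Real.Gamma_pos_of_pos (show (0:ℝ) < 1 + 0*(n:ℝ) by norm_num)
    have h3 := Real.Gamma_pos_of_pos (show (0:ℝ) < δ₁ + β₂*n by positivity)
    have h4 := Real.Gamma_pos_of_pos (show (0:ℝ) < δ₃ + β₃*n by positivity)
    rw [hG]; positivity
  set C : ℝ := Real.Gamma δ₁ / (Real.Gamma γ₁ * Real.Gamma γ₂) with hC
  have hsum : Summable (fun p : ℕ × ℕ => C * (F p.1 * G p.2)) :=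
    (SF.mul_of_nonneg SG hFnn hGnn).mul_left C
  apply Summable.of_nonneg_of_le (fun p => norm_nonneg _) _ hsum
  rintro ⟨m, n⟩
  -- positivity facts
  have pγ₁ := Real.Gamma_pos_of_pos hγ₁
  have pγ₂ := Real.Gamma_pos_of_pos hγ₂
  have pδ₁ := Real.Gamma_pos_of_pos hδ₁
  have p1 := Real.Gamma_pos_of_pos (show (0:ℝ) < γ₁ + (α₁*m + β₁*n) by positivity)
  have p2 := Real.Gamma_pos_of_pos (show (0:ℝ) < γ₂ + α₂*m by positivity)
  have p3 := Real.Gamma_pos_of_pos (show (0:ℝ) < δ₁ + α₃*m + β₂*n by positivity)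
  have p4 := Real.Gamma_pos_of_pos (show (0:ℝ) < δ₂ + α₄*m by positivity)
  have p5 := Real.Gamma_pos_of_pos (show (0:ℝ) < δ₃ + β₃*n by positivity)
  have p6 := Real.Gamma_pos_of_pos (show (0:ℝ) < γ₁ + 2*α₁*m by positivity)
  have p7 := Real.Gamma_pos_of_pos (show (0:ℝ) < γ₁ + 2*β₁*n by positivity)
  have p8 := Real.Gamma_pos_of_pos (show (0:ℝ) < δ₁ + α₃*m by positivity)
  have p9 := Real.Gamma_pos_of_pos (show (0:ℝ) < δ₁ + β₂*n by positivity)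
  -- compute the norm
  have hnorm : ‖E2term γ₁ α₁ β₁ γ₂ α₂ δ₁ α₃ β₂ δ₂ α₄ δ₃ β₃ x y (m, n)‖
      = (Real.Gamma (γ₁ + (α₁*m + β₁*n)) * Real.Gamma (γ₂ + α₂*m) * (‖x‖^m * ‖y‖^n))
        / (Real.Gamma γ₁ * Real.Gamma γ₂ *
          (Real.Gamma (δ₁ + α₃*m + β₂*n) * Real.Gamma (δ₂ + α₄*m) * Real.Gamma (δ₃ + β₃*n))) := by
    simp only [E2term, genPoch, norm_div, norm_mul, norm_pow, Complex.norm_real,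
      Real.norm_eq_abs, abs_div, abs_mul]
    rw [abs_of_pos p1, abs_of_pos pγ₁, abs_of_pos p2, abs_of_pos pγ₂, abs_of_pos p3,
      abs_of_pos p4, abs_of_pos p5]
    field_simp
  rw [hnorm]
  -- rewrite the bound as a single fraction
  have hCFG : C * (F m * G n)
      = (Real.Gamma δ₁ * (Real.Gamma (γ₁ + 2*α₁*m) ^ (1/2:ℝ) * Real.Gamma (γ₂ + α₂*m) * ‖x‖^m)
          * (Real.Gamma (γ₁ + 2*β₁*n) ^ (1/2:ℝ) * ‖y‖^n))
        / (Real.Gamma γ₁ * Real.Gamma γ₂ *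
          ((Real.Gamma (δ₁ + α₃*m) * Real.Gamma (δ₂ + α₄*m)) *
            (Real.Gamma (δ₁ + β₂*n) * Real.Gamma (δ₃ + β₃*n)))) := by
    rw [hC, hF, hG]
    have hone : Real.Gamma (1 + 0*(n:ℝ)) = 1 := by norm_num
    simp only [hone]
    field_simp
  rw [hCFG]
  -- compare fractions
  rw [div_le_div_iff₀ (by positivity) (by positivity)]
  have I1 : Real.Gamma (γ₁ + (α₁*m + β₁*n))
      ≤ Real.Gamma (γ₁ + 2*α₁*m) ^ (1/2:ℝ) * Real.Gamma (γ₁ + 2*β₁*n) ^ (1/2:ℝ) := by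
    have h := Real.Gamma_mul_add_mul_le_rpow_Gamma_mul_rpow_Gamma
      (show (0:ℝ) < γ₁ + 2*α₁*m by positivity) (show (0:ℝ) < γ₁ + 2*β₁*n by positivity)
      (by norm_num : (0:ℝ) < 1/2) (by norm_num : (0:ℝ) < 1/2) (by norm_num)
    rwa [show (1/2:ℝ) * (γ₁ + 2*α₁*m) + (1/2:ℝ) * (γ₁ + 2*β₁*n) = γ₁ + (α₁*m + β₁*n)
      by ring] at h
  have I2 : Real.Gamma (δ₁ + α₃*m) * Real.Gamma (δ₁ + β₂*n)
      ≤ Real.Gamma δ₁ * Real.Gamma (δ₁ + α₃*m + β₂*n) :=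
    Gamma_superadd δ₁ (α₃*m) (β₂*n) hδ₁ (by positivity) (by positivity)
  have hImul : Real.Gamma (γ₁ + (α₁*m + β₁*n)) * (Real.Gamma (δ₁ + α₃*m) * Real.Gamma (δ₁ + β₂*n))
      ≤ (Real.Gamma (γ₁ + 2*α₁*m) ^ (1/2:ℝ) * Real.Gamma (γ₁ + 2*β₁*n) ^ (1/2:ℝ))
        * (Real.Gamma δ₁ * Real.Gamma (δ₁ + α₃*m + β₂*n)) :=
    mul_le_mul I1 I2 (by positivity) (by positivity)
  have hR : (0:ℝ) ≤ Real.Gamma (γ₂ + α₂*m) * (‖x‖^m * ‖y‖^n)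
      * (Real.Gamma γ₁ * Real.Gamma γ₂) * (Real.Gamma (δ₂ + α₄*m) * Real.Gamma (δ₃ + β₃*n)) := by
    positivity
  calc Real.Gamma (γ₁ + (α₁*m + β₁*n)) * Real.Gamma (γ₂ + α₂*m) * (‖x‖^m * ‖y‖^n)
        * (Real.Gamma γ₁ * Real.Gamma γ₂ *
          ((Real.Gamma (δ₁ + α₃*m) * Real.Gamma (δ₂ + α₄*m)) *
            (Real.Gamma (δ₁ + β₂*n) * Real.Gamma (δ₃ + β₃*n))))
      = (Real.Gamma (γ₁ + (α₁*m + β₁*n)) * (Real.Gamma (δ₁ + α₃*m) * Real.Gamma (δ₁ + β₂*n)))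
        * (Real.Gamma (γ₂ + α₂*m) * (‖x‖^m * ‖y‖^n)
          * (Real.Gamma γ₁ * Real.Gamma γ₂) * (Real.Gamma (δ₂ + α₄*m) * Real.Gamma (δ₃ + β₃*n))) := by
        ring
    _ ≤ ((Real.Gamma (γ₁ + 2*α₁*m) ^ (1/2:ℝ) * Real.Gamma (γ₁ + 2*β₁*n) ^ (1/2:ℝ))
        * (Real.Gamma δ₁ * Real.Gamma (δ₁ + α₃*m + β₂*n)))
        * (Real.Gamma (γ₂ + α₂*m) * (‖x‖^m * ‖y‖^n)
          * (Real.Gamma γ₁ * Real.Gamma γ₂) * (Real.Gamma (δ₂ + α₄*m) * Real.Gamma (δ₃ + β₃*n))) :=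
        mul_le_mul_of_nonneg_right hImul hR
    _ = Real.Gamma δ₁ * (Real.Gamma (γ₁ + 2*α₁*m) ^ (1/2:ℝ) * Real.Gamma (γ₂ + α₂*m) * ‖x‖^m)
          * (Real.Gamma (γ₁ + 2*β₁*n) ^ (1/2:ℝ) * ‖y‖^n)
        * (Real.Gamma γ₁ * Real.Gamma γ₂ *
          (Real.Gamma (δ₁ + α₃*m + β₂*n) * Real.Gamma (δ₂ + α₄*m) * Real.Gamma (δ₃ + β₃*n))) := by
        ring
end

section
/- Let a > 1/2 and let g : [0,1] → ℝ be Hölder continuous with exponent a and Hölder constant ‖g‖, satisfying g(0) = g(1) = 0. Let g_k = 2∫_0^1 g(x) sin(πkx) dx be its sine Fourier coefficients. Then for every σ ∈ [0, a - 1/2) there exists a constant C > 0, independent of g, such that ∑_{k=1}^∞ k^σ |g_k| ≤ C‖g‖. -/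
open Real MeasureTheory

section aux
open intervalIntegral

lemma contOn_of_holder {f : ℝ → ℝ} {s : Set ℝ} {K a : ℝ} (ha : 0 < a)
    (h : ∀ x ∈ s, ∀ y ∈ s, |f x - f y| ≤ K * |x - y| ^ a) : ContinuousOn f s := by
  intro x hx
  have key : Filter.Tendsto (fun y => K * |y - x| ^ a) (nhdsWithin x s) (nhds 0) := by
    have h1 : Filter.Tendsto (fun y : ℝ => |y - x|) (nhdsWithin x s) (nhds 0) := by
      have h0 : Filter.Tendsto (fun y : ℝ => |y - x|) (nhds x) (nhds 0) := by
        have := ((continuous_id.sub (continuous_const (y := x))).abs).tendsto x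
        simpa using this
      exact h0.mono_left nhdsWithin_le_nhds
    have h2 : Filter.Tendsto (fun t : ℝ => K * t ^ a) (nhds 0) (nhds 0) := by
      have := (Real.continuousAt_rpow_const 0 a (Or.inr ha.le)).tendsto
      rw [Real.zero_rpow ha.ne'] at this
      simpa using (this.const_mul K)
    exact h2.comp h1
  rw [ContinuousWithinAt, tendsto_iff_dist_tendsto_zero]
  apply squeeze_zero' (Filter.Eventually.of_forall fun y => dist_nonneg)
  · filter_upwards [self_mem_nhdsWithin] with y hy
    simpa [Real.dist_eq] using h y hy x hx
  · exact key

lemma integral_odd_about {F : ℝ → ℝ} {c h : ℝ} (h0 : 0 ≤ h)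
    (hF : ContinuousOn F (Set.Icc (c - h) (c + h)))
    (hodd : ∀ t ∈ Set.Icc 0 h, F (c - t) = -F (c + t)) :
    ∫ x in (c - h)..(c + h), F x = 0 := by
  have hshift : ∫ x in (c - h)..(c + h), F x = ∫ u in (-h)..h, F (c + u) := by
    rw [intervalIntegral.integral_comp_add_left F]
    congr 1 <;> ring
  have hcont : ContinuousOn (fun u => F (c + u)) (Set.Icc (-h) h) := by
    apply hF.comp (continuous_const.add continuous_id).continuousOn
    intro u hu
    simp only [Set.mem_Icc, id_eq, Pi.add_apply] at hu ⊢
    constructor <;> linarith [hu.1, hu.2]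
  have hi1 : IntervalIntegrable (fun u => F (c + u)) volume (-h) 0 := by
    apply ContinuousOn.intervalIntegrable
    apply hcont.mono
    rw [Set.uIcc_of_le (by linarith)]
    exact Set.Icc_subset_Icc le_rfl h0
  have hi2 : IntervalIntegrable (fun u => F (c + u)) volume 0 h := by
    apply ContinuousOn.intervalIntegrable
    apply hcont.mono
    rw [Set.uIcc_of_le h0]
    exact Set.Icc_subset_Icc (by linarith) le_rfl
  have hsplit : ∫ u in (-h)..h, F (c + u) =
      (∫ u in (-h)..(0:ℝ), F (c + u)) + ∫ u in (0:ℝ)..h, F (c + u) :=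
    (intervalIntegral.integral_add_adjacent_intervals hi1 hi2).symm
  have hneg : ∫ u in (-h)..(0:ℝ), F (c + u) = - ∫ u in (0:ℝ)..h, F (c + u) := by
    have hcn := intervalIntegral.integral_comp_neg (a := (0:ℝ)) (b := h) (fun u => F (c + u))
    rw [neg_zero] at hcn
    rw [← hcn, ← intervalIntegral.integral_neg]
    apply intervalIntegral.integral_congr
    intro t ht
    rw [Set.uIcc_of_le h0] at ht
    show F (c + -t) = -F (c + t)
    rw [← sub_eq_add_neg]
    exact hodd t ht
  rw [hshift, hsplit, hneg]; ring

lemma integral_even_about {F : ℝ → ℝ} {c h : ℝ} (h0 : 0 ≤ h)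
    (heven : ∀ t ∈ Set.Icc 0 h, F (c - t) = F (c + t)) :
    ∫ x in (c - h)..c, F x = ∫ x in c..(c + h), F x := by
  have h1 : ∫ x in (c - h)..c, F x = ∫ u in (-h)..(0:ℝ), F (c + u) := by
    rw [intervalIntegral.integral_comp_add_left F]
    congr 1 <;> ring
  have h2 : ∫ x in c..(c+h), F x = ∫ u in (0:ℝ)..h, F (c + u) := by
    rw [intervalIntegral.integral_comp_add_left F]
    congr 1 <;> ring
  rw [h1, h2]
  have hcn := intervalIntegral.integral_comp_neg (a := (0:ℝ)) (b := h) (fun u => F (c + u))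
  rw [neg_zero] at hcn
  rw [← hcn]
  apply intervalIntegral.integral_congr
  intro t ht
  rw [Set.uIcc_of_le h0] at ht
  show F (c + -t) = F (c + t)
  rw [← sub_eq_add_neg]
  exact heven t ht

lemma integral_cos_pi_int (m : ℤ) (hm : m ≠ 0) :
    ∫ x in (0:ℝ)..1, Real.cos (π * m * x) = 0 := by
  have hc : (π * m : ℝ) ≠ 0 := by
    apply mul_ne_zero Real.pi_ne_zero
    exact_mod_cast hm
  have := intervalIntegral.integral_comp_mul_left (f := Real.cos) (a := (0:ℝ)) (b := 1) hc
  simp only [mul_zero, mul_one] at this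
  rw [show (fun x => Real.cos (π * m * x)) = (fun x => Real.cos (π * m * x)) from rfl]
  have h2 : ∫ x in (0:ℝ)..1, Real.cos (π * m * x) = (π*m)⁻¹ • ∫ x in (0:ℝ)..(π*m), Real.cos x := by
    rw [← this]
  rw [h2, integral_cos, Real.sin_zero, sub_zero, mul_comm π (m:ℝ), Real.sin_int_mul_pi]
  simp

lemma ortho_cos (j k : ℕ) (hj : 1 ≤ j) (hk : 1 ≤ k) :
    ∫ x in (0:ℝ)..1, (Real.sqrt 2 * Real.cos (π * j * x)) * (Real.sqrt 2 * Real.cos (π * k * x))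
      = if j = k then 1 else 0 := by
  have key : ∀ x : ℝ, (Real.sqrt 2 * Real.cos (π * j * x)) * (Real.sqrt 2 * Real.cos (π * k * x))
      = Real.cos (π * ((j:ℝ) - k) * x) + Real.cos (π * ((j:ℝ) + k) * x) := by
    intro x
    have h2 : Real.sqrt 2 * Real.sqrt 2 = 2 := Real.mul_self_sqrt (by norm_num)
    have e1 : π * ((j:ℝ) - k) * x = π * j * x - π * k * x := by ring
    have e2 : π * ((j:ℝ) + k) * x = π * j * x + π * k * x := by ring
    rw [e1, e2, Real.cos_sub, Real.cos_add]
    linear_combination Real.cos (π * (j:ℝ) * x) * Real.cos (π * (k:ℝ) * x) * h2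
  rw [intervalIntegral.integral_congr (g := fun x => Real.cos (π * ((j:ℝ) - k) * x) + Real.cos (π * ((j:ℝ) + k) * x)) (fun x _ => key x)]
  have hint : ∀ c : ℝ, IntervalIntegrable (fun x => Real.cos (c * x)) volume 0 1 :=
    fun c => (Real.continuous_cos.comp (continuous_const.mul continuous_id)).intervalIntegrable 0 1
  rw [intervalIntegral.integral_add (hint _) (hint _)]
  have hsum : ∫ x in (0:ℝ)..1, Real.cos (π * ((j:ℝ) + k) * x) = 0 := by
    have : ((j:ℝ) + k) = ((j + k : ℤ) : ℝ) := by push_cast; ring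
    rw [this]
    exact integral_cos_pi_int _ (by positivity)
  rw [hsum, add_zero]
  by_cases hjk : j = k
  · subst hjk
    simp only [sub_self, mul_zero, zero_mul, Real.cos_zero, if_pos rfl]
    simp
  · have : ((j:ℝ) - k) = ((j - k : ℤ) : ℝ) := by push_cast; ring
    rw [if_neg hjk, this, integral_cos_pi_int _ ?_]
    exact sub_ne_zero.mpr (by exact_mod_cast hjk)

lemma bessel_general {D : ℝ → ℝ} (hD : ContinuousOn D (Set.Icc 0 1)) (e : ℕ → ℝ → ℝ)
    (hecont : ∀ k, Continuous (e k)) (s : Finset ℕ)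
    (ho : ∀ j ∈ s, ∀ k ∈ s,
      (∫ x in (0:ℝ)..1, e j x * e k x) = if j = k then 1 else 0) :
    ∑ k ∈ s, (∫ x in (0:ℝ)..1, D x * e k x)^2 ≤ ∫ x in (0:ℝ)..1, (D x)^2 := by
  set c : ℕ → ℝ := fun k => ∫ x in (0:ℝ)..1, D x * e k x with hc
  have hDicc : ContinuousOn D (Set.uIcc (0:ℝ) 1) := by
    rwa [Set.uIcc_of_le (by norm_num)]
  have hint_De : ∀ k, IntervalIntegrable (fun x => D x * e k x) volume 0 1 :=
    fun k => (hDicc.mul (hecont k).continuousOn).intervalIntegrable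
  have hint_ee : ∀ j k, IntervalIntegrable (fun x => e j x * e k x) volume 0 1 :=
    fun j k => ((hecont j).mul (hecont k)).intervalIntegrable 0 1
  have hint_D2 : IntervalIntegrable (fun x => (D x)^2) volume 0 1 :=
    (hDicc.pow 2).intervalIntegrable
  set S : ℝ → ℝ := fun x => ∑ k ∈ s, c k * e k x with hS
  have hScont : Continuous S := by
    apply continuous_finset_sum
    exact fun k _ => continuous_const.mul (hecont k)
  have hint_DS : IntervalIntegrable (fun x => D x * S x) volume 0 1 :=
    (hDicc.mul hScont.continuousOn).intervalIntegrable
  have hint_S2 : IntervalIntegrable (fun x => (S x)^2) volume 0 1 :=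
    ((hScont.pow 2)).intervalIntegrable 0 1
  have hDS : ∫ x in (0:ℝ)..1, D x * S x = ∑ k ∈ s, (c k)^2 := by
    have h1 : ∀ x, D x * S x = ∑ k ∈ s, c k * (D x * e k x) := by
      intro x; rw [hS]; simp only; rw [Finset.mul_sum]; apply Finset.sum_congr rfl
      intro k _; ring
    rw [intervalIntegral.integral_congr (g := fun x => ∑ k ∈ s, c k * (D x * e k x))
      (fun x _ => h1 x)]
    rw [intervalIntegral.integral_finset_sum (fun k _ => (hint_De k).const_mul (c k))]
    apply Finset.sum_congr rfl
    intro k _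
    rw [intervalIntegral.integral_const_mul]
    have hck : (∫ x in (0:ℝ)..1, D x * e k x) = c k := rfl
    rw [hck]; ring
  have hS2 : ∫ x in (0:ℝ)..1, (S x)^2 = ∑ k ∈ s, (c k)^2 := by
    have expand : ∀ x, (S x)^2 = ∑ j ∈ s, ∑ k ∈ s, (c j * c k) * (e j x * e k x) := by
      intro x; rw [hS]; simp only
      rw [sq, Finset.sum_mul_sum]
      apply Finset.sum_congr rfl; intro j _; apply Finset.sum_congr rfl; intro k _; ring
    rw [intervalIntegral.integral_congr
      (g := fun x => ∑ j ∈ s, ∑ k ∈ s, (c j * c k) * (e j x * e k x)) (fun x _ => expand x)]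
    have hint_inner : ∀ j, IntervalIntegrable
        (fun x => ∑ k ∈ s, (c j * c k) * (e j x * e k x)) volume 0 1 :=
      fun j => by
        have hsum := IntervalIntegrable.sum (f := fun k x => (c j * c k) * (e j x * e k x))
          s (fun k _ => (hint_ee j k).const_mul _)
        have heq : (∑ i ∈ s, fun x => (c j * c i) * (e j x * e i x))
            = fun x => ∑ k ∈ s, (c j * c k) * (e j x * e k x) := by
          ext x; simp [Finset.sum_apply]
        rwa [heq] at hsum
    rw [intervalIntegral.integral_finset_sum (fun j _ => hint_inner j)]
    apply Finset.sum_congr rfl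
    intro j hj
    rw [intervalIntegral.integral_finset_sum (fun k _ => (hint_ee j k).const_mul _)]
    have h2 : ∀ k ∈ s, (∫ x in (0:ℝ)..1, (c j * c k) * (e j x * e k x))
        = if j = k then (c j)^2 else 0 := by
      intro k hk
      rw [intervalIntegral.integral_const_mul, ho j hj k hk]
      by_cases hjk : j = k
      · subst hjk; simp [sq]
      · simp [hjk]
    rw [Finset.sum_congr rfl h2]
    simp [Finset.sum_ite_eq, hj]
  have hpos : 0 ≤ ∫ x in (0:ℝ)..1, (D x - S x)^2 :=
    intervalIntegral.integral_nonneg (by norm_num) (fun u _ => sq_nonneg _)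
  have hexpand : ∫ x in (0:ℝ)..1, (D x - S x)^2
      = (∫ x in (0:ℝ)..1, (D x)^2) - 2 * (∫ x in (0:ℝ)..1, D x * S x)
        + ∫ x in (0:ℝ)..1, (S x)^2 := by
    have h3 : ∀ x, (D x - S x)^2 = (D x)^2 - 2 * (D x * S x) + (S x)^2 := fun x => by ring
    rw [intervalIntegral.integral_congr
      (g := fun x => (D x)^2 - 2 * (D x * S x) + (S x)^2) (fun x _ => h3 x)]
    rw [intervalIntegral.integral_add (IntervalIntegrable.sub hint_D2 (hint_DS.const_mul 2)) hint_S2,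
      intervalIntegral.integral_sub hint_D2 (hint_DS.const_mul 2),
      intervalIntegral.integral_const_mul]
  rw [hexpand, hDS, hS2] at hpos
  linarith

noncomputable def Gext (g : ℝ → ℝ) : ℝ → ℝ :=
  fun x => if x < 0 then -g (-x) else if x ≤ 1 then g x else -g (2 - x)

lemma Gext_eq (g : ℝ → ℝ) {x : ℝ} (hx0 : 0 ≤ x) (hx1 : x ≤ 1) : Gext g x = g x := by
  simp [Gext, not_lt.mpr hx0, hx1]

section holder
variable {g : ℝ → ℝ} {H A : ℝ}
  (hH : ∀ x₁ ∈ Set.Icc (0:ℝ) 1, ∀ x₂ ∈ Set.Icc (0:ℝ) 1, |g x₁ - g x₂| ≤ H * |x₁ - x₂| ^ A)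
  (hA : 0 < A) (hg0 : g 0 = 0) (hg1 : g 1 = 0)

include hH hA hg0 hg1

lemma holder_H_nonneg : 0 ≤ H := by
  have := hH 0 (by norm_num) 1 (by norm_num)
  rw [hg0, hg1] at this
  simpa using this

lemma holder_Gext : ∀ x ∈ Set.Icc (-1:ℝ) 2, ∀ y ∈ Set.Icc (-1:ℝ) 2,
    |Gext g x - Gext g y| ≤ (2*H) * |x - y| ^ A := by
  have hH0 : 0 ≤ H := holder_H_nonneg hH hA hg0 hg1
  have mono : ∀ s t : ℝ, 0 ≤ s → s ≤ t → s ^ A ≤ t ^ A :=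
    fun s t hs hst => Real.rpow_le_rpow hs hst hA.le
  have habs : ∀ s t : ℝ, s ∈ Set.Icc (0:ℝ) 1 → t ∈ Set.Icc (0:ℝ) 1 →
      |g s - g t| ≤ H * |s - t| ^ A := fun s t hs ht => hH s hs t ht
  -- key single bounds
  have hb0 : ∀ s : ℝ, s ∈ Set.Icc (0:ℝ) 1 → |g s| ≤ H * s ^ A := by
    intro s hs
    have := hH s hs 0 (by norm_num)
    rw [hg0, sub_zero, sub_zero, abs_of_nonneg hs.1] at this
    exact this
  have hb1 : ∀ s : ℝ, s ∈ Set.Icc (0:ℝ) 1 → |g s| ≤ H * (1 - s) ^ A := by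
    intro s hs
    have := hH s hs 1 (by norm_num)
    rw [hg1, sub_zero] at this
    rwa [abs_of_nonpos (show s - 1 ≤ 0 by linarith [hs.2]), neg_sub] at this
  -- case analysis helper: for points in the three regions
  intro x hx y hy
  obtain ⟨hxl, hxr⟩ := hx
  obtain ⟨hyl, hyr⟩ := hy
  have key : ∀ u v : ℝ, -1 ≤ u → u ≤ 2 → -1 ≤ v → v ≤ 2 → u ≤ v →
      |Gext g u - Gext g v| ≤ (2*H) * |u - v| ^ A := by
    intro u v hu1 hu2 hv1 hv2 huv
    have hvu : |u - v| = v - u := by rw [abs_sub_comm, abs_of_nonneg (by linarith)]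
    rw [hvu]
    by_cases hu0 : u < 0
    · have hGu : Gext g u = -g (-u) := by simp [Gext, hu0]
      have hmu : (-u) ∈ Set.Icc (0:ℝ) 1 := ⟨by linarith, by linarith⟩
      by_cases hv0 : v < 0
      · -- both negative
        have hGv : Gext g v = -g (-v) := by simp [Gext, hv0]
        have hmv : (-v) ∈ Set.Icc (0:ℝ) 1 := ⟨by linarith, by linarith⟩
        have := habs (-v) (-u) hmv hmu
        rw [hGu, hGv]
        calc |(-g (-u)) - (-g (-v))| = |g (-v) - g (-u)| := by
              rw [show (-g (-u)) - (-g (-v)) = g (-v) - g (-u) by ring]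
          _ ≤ H * |(-v) - (-u)| ^ A := this
          _ ≤ (2*H) * (v - u) ^ A := by
              rw [show |(-v) - (-u)| = v - u by rw [abs_of_nonpos (by linarith)]; ring]
              nlinarith [Real.rpow_nonneg (show (0:ℝ) ≤ v - u by linarith) A]
      · push_neg at hv0
        by_cases hv1' : v ≤ 1
        · -- u < 0 ≤ v ≤ 1
          have hGv : Gext g v = g v := Gext_eq g hv0 hv1'
          rw [hGu, hGv]
          have h1 := hb0 (-u) hmu
          have h2 := hb0 v ⟨hv0, hv1'⟩
          have e1 : (-u) ^ A ≤ (v - u) ^ A := mono _ _ (by linarith) (by linarith)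
          have e2 : v ^ A ≤ (v - u) ^ A := mono _ _ hv0 (by linarith)
          calc |(-g (-u)) - g v| ≤ |g (-u)| + |g v| := by
                rw [show (-g (-u)) - g v = -(g (-u) + g v) by ring, abs_neg]
                exact abs_add_le _ _
            _ ≤ H * (-u) ^ A + H * v ^ A := add_le_add h1 h2
            _ ≤ (2*H) * (v - u) ^ A := by nlinarith
        · -- u < 0, v > 1
          push_neg at hv1'
          have hGv : Gext g v = -g (2 - v) := by
            simp [Gext, not_lt.mpr (by linarith : (0:ℝ) ≤ v), not_le.mpr hv1']
          rw [hGu, hGv]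
          have hm2v : (2 - v) ∈ Set.Icc (0:ℝ) 1 := ⟨by linarith, by linarith⟩
          have h1 := hb0 (-u) hmu
          have h2 := hb1 (2 - v) hm2v
          have e1 : (-u) ^ A ≤ (v - u) ^ A := mono _ _ (by linarith) (by linarith)
          have e2 : (1 - (2 - v)) ^ A ≤ (v - u) ^ A := mono _ _ (by linarith) (by linarith)
          calc |(-g (-u)) - (-g (2 - v))| ≤ |g (-u)| + |g (2 - v)| := by
                rw [show (-g (-u)) - (-g (2 - v)) = -(g (-u) - g (2 - v)) by ring, abs_neg]
                exact abs_sub _ _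
            _ ≤ H * (-u) ^ A + H * (1 - (2 - v)) ^ A := add_le_add h1 h2
            _ ≤ (2*H) * (v - u) ^ A := by nlinarith
    · push_neg at hu0
      have hGu' : u ≤ 1 → Gext g u = g u := fun h => Gext_eq g hu0 h
      by_cases hu1' : u ≤ 1
      · have hGu : Gext g u = g u := hGu' hu1'
        by_cases hv1' : v ≤ 1
        · -- both in [0,1]
          have hGv : Gext g v = g v := Gext_eq g (by linarith) hv1'
          rw [hGu, hGv]
          have := habs u v ⟨hu0, hu1'⟩ ⟨by linarith, hv1'⟩
          rw [abs_of_nonpos (show u - v ≤ 0 by linarith), neg_sub] at this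
          nlinarith [Real.rpow_nonneg (show (0:ℝ) ≤ v - u by linarith) A]
        · -- u ∈ [0,1], v > 1
          push_neg at hv1'
          have hGv : Gext g v = -g (2 - v) := by
            simp [Gext, not_lt.mpr (by linarith : (0:ℝ) ≤ v), not_le.mpr hv1']
          rw [hGu, hGv]
          have hm2v : (2 - v) ∈ Set.Icc (0:ℝ) 1 := ⟨by linarith, by linarith⟩
          have h1 := hb1 u ⟨hu0, hu1'⟩
          have h2 := hb1 (2 - v) hm2v
          have e1 : (1 - u) ^ A ≤ (v - u) ^ A := mono _ _ (by linarith) (by linarith)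
          have e2 : (1 - (2 - v)) ^ A ≤ (v - u) ^ A := mono _ _ (by linarith) (by linarith)
          calc |g u - (-g (2 - v))| ≤ |g u| + |g (2 - v)| := by
                rw [show g u - (-g (2 - v)) = g u + g (2 - v) by ring]
                exact abs_add_le _ _
            _ ≤ H * (1 - u) ^ A + H * (1 - (2 - v)) ^ A := add_le_add h1 h2
            _ ≤ (2*H) * (v - u) ^ A := by nlinarith
      · -- u > 1 hence v > 1
        push_neg at hu1'
        have hGu : Gext g u = -g (2 - u) := by
          simp [Gext, not_lt.mpr (by linarith : (0:ℝ) ≤ u), not_le.mpr hu1']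
        have hv1'' : 1 < v := by linarith
        have hGv : Gext g v = -g (2 - v) := by
          simp [Gext, not_lt.mpr (by linarith : (0:ℝ) ≤ v), not_le.mpr (show (1:ℝ) < v by linarith)]
        rw [hGu, hGv]
        have hm2u : (2 - u) ∈ Set.Icc (0:ℝ) 1 := ⟨by linarith, by linarith⟩
        have hm2v : (2 - v) ∈ Set.Icc (0:ℝ) 1 := ⟨by linarith, by linarith⟩
        have := habs (2 - v) (2 - u) hm2v hm2u
        rw [show |(2 - v) - (2 - u)| = v - u by rw [show (2-v) - (2-u) = -(v-u) by ring, abs_neg, abs_of_nonneg (by linarith)]] at this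
        calc |(-g (2 - u)) - (-g (2 - v))| = |g (2 - v) - g (2 - u)| := by
              rw [show (-g (2 - u)) - (-g (2 - v)) = g (2 - v) - g (2 - u) by ring]
          _ ≤ H * (v - u) ^ A := this
          _ ≤ (2*H) * (v - u) ^ A := by nlinarith [Real.rpow_nonneg (show (0:ℝ) ≤ v - u by linarith) A]
  rcases le_total x y with hxy | hxy
  · exact key x y hxl hxr hyl hyr hxy
  · rw [abs_sub_comm (Gext g x), abs_sub_comm x]
    exact key y x hyl hyr hxl hxr hxy
end holder
lemma Gext_neg (g : ℝ → ℝ) (hg0 : g 0 = 0) {t : ℝ} (ht0 : 0 ≤ t) (ht1 : t ≤ 1) :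
    Gext g (-t) = -Gext g t := by
  rcases eq_or_lt_of_le ht0 with h | h
  · rw [← h]; simp [Gext_eq g le_rfl zero_le_one, hg0]
  · rw [Gext_eq g ht0 ht1, show Gext g (-t) = -g (-(-t)) from by simp [Gext, neg_neg, h], neg_neg]

lemma Gext_one_add (g : ℝ → ℝ) (hg1 : g 1 = 0) {t : ℝ} (ht0 : 0 ≤ t) (ht1 : t ≤ 1) :
    Gext g (1 + t) = -Gext g (1 - t) := by
  rcases eq_or_lt_of_le ht0 with h | h
  · rw [← h]; simp [Gext_eq g zero_le_one le_rfl, hg1]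
  · have h1 : Gext g (1 + t) = -g (2 - (1 + t)) := by
      simp [Gext, not_lt.mpr (by linarith : (0:ℝ) ≤ 1 + t), not_le.mpr (by linarith : (1:ℝ) < 1 + t)]
    rw [show (2:ℝ) - (1 + t) = 1 - t by ring] at h1
    rw [h1, Gext_eq g (by linarith) (by linarith)]

lemma coeff_identity (g : ℝ → ℝ) (hg0 : g 0 = 0) (hg1 : g 1 = 0)
    (hGc : ContinuousOn (Gext g) (Set.Icc (-1:ℝ) 2)) (k : ℕ) (h : ℝ)
    (h0 : 0 < h) (h14 : h ≤ 1/4) :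
    ∫ x in (0:ℝ)..1, (Gext g (x + h) - Gext g (x - h)) * Real.cos (π * k * x)
      = Real.sin (π * k * h) * (2 * ∫ x in (0:ℝ)..1, g x * Real.sin (π * k * x)) := by
  set G := Gext g with hG
  set P : ℝ := π * k with hP
  have hsinP : Real.sin P = 0 := by rw [hP, mul_comm]; exact Real.sin_nat_mul_pi k
  -- continuity of products
  have hGcos : ContinuousOn (fun y => G y * Real.cos (P * y)) (Set.Icc (-1:ℝ) 2) :=
    hGc.mul (Real.continuous_cos.comp (continuous_const.mul continuous_id)).continuousOn
  have hGsin : ContinuousOn (fun y => G y * Real.sin (P * y)) (Set.Icc (-1:ℝ) 2) :=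
    hGc.mul (Real.continuous_sin.comp (continuous_const.mul continuous_id)).continuousOn
  have hinteg : ∀ (F : ℝ → ℝ), ContinuousOn F (Set.Icc (-1:ℝ) 2) → ∀ p q : ℝ,
      p ∈ Set.Icc (-1:ℝ) 2 → q ∈ Set.Icc (-1:ℝ) 2 → IntervalIntegrable F volume p q := by
    intro F hF p q hp hq
    apply ContinuousOn.intervalIntegrable
    exact hF.mono (Set.uIcc_subset_Icc hp hq)
  have mem : ∀ r : ℝ, -1 ≤ r → r ≤ 2 → r ∈ Set.Icc (-1:ℝ) 2 := fun r h1 h2 => ⟨h1, h2⟩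
  -- step 1
  have step1 : (∫ x in (0:ℝ)..1, G (x + h) * Real.cos (P * x))
      = Real.cos (P * h) * (∫ y in h..(1+h), G y * Real.cos (P * y))
        + Real.sin (P * h) * (∫ y in h..(1+h), G y * Real.sin (P * y)) := by
    have t1 := intervalIntegral.integral_comp_add_right (a := (0:ℝ)) (b := 1)
      (fun y => G y * Real.cos (P * (y - h))) h
    simp only [add_sub_cancel_right, zero_add] at t1
    rw [t1]
    have expand : Set.EqOn (fun y => G y * Real.cos (P * (y - h)))
        (fun y => Real.cos (P*h) * (G y * Real.cos (P * y))
          + Real.sin (P*h) * (G y * Real.sin (P * y))) (Set.uIcc h (1+h)) := by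
      intro y _
      simp only
      rw [show P * (y - h) = P * y - P * h by ring, Real.cos_sub]
      ring
    rw [intervalIntegral.integral_congr expand]
    rw [intervalIntegral.integral_add
      (((hinteg _ hGcos h (1+h) (mem _ (by linarith) (by linarith))
          (mem _ (by linarith) (by linarith))).const_mul _))
      (((hinteg _ hGsin h (1+h) (mem _ (by linarith) (by linarith))
          (mem _ (by linarith) (by linarith))).const_mul _)),
      intervalIntegral.integral_const_mul, intervalIntegral.integral_const_mul]
  -- step 2
  have step2 : (∫ x in (0:ℝ)..1, G (x - h) * Real.cos (P * x))
      = Real.cos (P * h) * (∫ y in (-h)..(1-h), G y * Real.cos (P * y))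
        - Real.sin (P * h) * (∫ y in (-h)..(1-h), G y * Real.sin (P * y)) := by
    have t1 := intervalIntegral.integral_comp_sub_right (a := (0:ℝ)) (b := 1)
      (fun y => G y * Real.cos (P * (y + h))) h
    simp only [sub_add_cancel_right, zero_sub, sub_add_cancel] at t1
    rw [t1]
    have expand : Set.EqOn (fun y => G y * Real.cos (P * (y + h)))
        (fun y => Real.cos (P*h) * (G y * Real.cos (P * y))
          - Real.sin (P*h) * (G y * Real.sin (P * y))) (Set.uIcc (-h) (1-h)) := by
      intro y _
      simp only
      rw [show P * (y + h) = P * y + P * h by ring, Real.cos_add]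
      ring
    rw [intervalIntegral.integral_congr expand]
    rw [intervalIntegral.integral_sub
      (((hinteg _ hGcos (-h) (1-h) (mem _ (by linarith) (by linarith))
          (mem _ (by linarith) (by linarith))).const_mul _))
      (((hinteg _ hGsin (-h) (1-h) (mem _ (by linarith) (by linarith))
          (mem _ (by linarith) (by linarith))).const_mul _)),
      intervalIntegral.integral_const_mul, intervalIntegral.integral_const_mul]
  -- trig symmetry facts
  have hcos1 : ∀ t : ℝ, Real.cos (P*(1-t)) = Real.cos (P*(1+t)) := by
    intro t
    rw [show P*(1-t) = P - P*t by ring, show P*(1+t) = P + P*t by ring,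
      Real.cos_sub, Real.cos_add, hsinP]
    ring
  have hsin1 : ∀ t : ℝ, Real.sin (P*(1-t)) = -Real.sin (P*(1+t)) := by
    intro t
    rw [show P*(1-t) = P - P*t by ring, show P*(1+t) = P + P*t by ring,
      Real.sin_sub, Real.sin_add, hsinP]
    ring
  have hh1 : h ≤ 1 := by linarith
  -- zero integrals of G·cos around 0 and 1
  have zero0 : ∫ y in (-h)..h, G y * Real.cos (P*y) = 0 := by
    have := integral_odd_about (F := fun y => G y * Real.cos (P*y)) (c := 0) (h := h) h0.le
      (hGcos.mono (Set.Icc_subset_Icc (by linarith) (by linarith)))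
      (fun t ht => by
        simp only [zero_sub, zero_add]
        rw [hG, Gext_neg g hg0 ht.1 (le_trans ht.2 hh1),
          show P * -t = -(P*t) by ring, Real.cos_neg]
        ring)
    simpa using this
  have zero1 : ∫ y in (1-h)..(1+h), G y * Real.cos (P*y) = 0 := by
    apply integral_odd_about (F := fun y => G y * Real.cos (P*y)) (c := 1) (h := h) h0.le
      (hGcos.mono (Set.Icc_subset_Icc (by linarith) (by linarith)))
    intro t ht
    rw [hG, Gext_one_add g hg1 ht.1 (le_trans ht.2 hh1), hcos1 t]
    ring
  -- even reflections of G·sin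
  have even0 : ∫ y in (-h)..(0:ℝ), G y * Real.sin (P*y) = ∫ y in (0:ℝ)..h, G y * Real.sin (P*y) := by
    have := integral_even_about (F := fun y => G y * Real.sin (P*y)) (c := 0) (h := h) h0.le
      (fun t ht => by
        simp only [zero_sub, zero_add]
        rw [hG, Gext_neg g hg0 ht.1 (le_trans ht.2 hh1),
          show P * -t = -(P*t) by ring, Real.sin_neg]
        ring)
    simpa using this
  have even1 : ∫ y in (1-h)..(1:ℝ), G y * Real.sin (P*y) = ∫ y in (1:ℝ)..(1+h), G y * Real.sin (P*y) := by
    apply integral_even_about (F := fun y => G y * Real.sin (P*y)) (c := 1) (h := h) h0.le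
    intro t ht
    rw [hG, Gext_one_add g hg1 ht.1 (le_trans ht.2 hh1), hsin1 t]
    ring
  -- splitting
  have iGc : ∀ p q : ℝ, -1 ≤ p → p ≤ 2 → -1 ≤ q → q ≤ 2 →
      IntervalIntegrable (fun y => G y * Real.cos (P*y)) volume p q :=
    fun p q a b c d => hinteg _ hGcos p q (mem _ a b) (mem _ c d)
  have iGs : ∀ p q : ℝ, -1 ≤ p → p ≤ 2 → -1 ≤ q → q ≤ 2 →
      IntervalIntegrable (fun y => G y * Real.sin (P*y)) volume p q :=
    fun p q a b c d => hinteg _ hGsin p q (mem _ a b) (mem _ c d)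
  have csplit1 : (∫ y in (-h)..(1-h), G y * Real.cos (P*y))
      = (∫ y in (-h)..h, G y * Real.cos (P*y)) + ∫ y in h..(1-h), G y * Real.cos (P*y) :=
    (intervalIntegral.integral_add_adjacent_intervals
      (iGc _ _ (by linarith) (by linarith) (by linarith) (by linarith))
      (iGc _ _ (by linarith) (by linarith) (by linarith) (by linarith))).symm
  have csplit2 : (∫ y in h..(1+h), G y * Real.cos (P*y))
      = (∫ y in h..(1-h), G y * Real.cos (P*y)) + ∫ y in (1-h)..(1+h), G y * Real.cos (P*y) :=
    (intervalIntegral.integral_add_adjacent_intervals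
      (iGc _ _ (by linarith) (by linarith) (by linarith) (by linarith))
      (iGc _ _ (by linarith) (by linarith) (by linarith) (by linarith))).symm
  have ccos_eq : (∫ y in h..(1+h), G y * Real.cos (P*y))
      = ∫ y in (-h)..(1-h), G y * Real.cos (P*y) := by
    rw [csplit1, csplit2, zero0, zero1]; ring
  have ssplit1 : (∫ y in h..(1+h), G y * Real.sin (P*y))
      = (∫ y in h..(1:ℝ), G y * Real.sin (P*y)) + ∫ y in (1:ℝ)..(1+h), G y * Real.sin (P*y) :=
    (intervalIntegral.integral_add_adjacent_intervals
      (iGs _ _ (by linarith) (by linarith) (by linarith) (by linarith))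
      (iGs _ _ (by linarith) (by linarith) (by linarith) (by linarith))).symm
  have ssplit2 : (∫ y in (-h)..(1-h), G y * Real.sin (P*y))
      = (∫ y in (-h)..(0:ℝ), G y * Real.sin (P*y)) + ∫ y in (0:ℝ)..(1-h), G y * Real.sin (P*y) :=
    (intervalIntegral.integral_add_adjacent_intervals
      (iGs _ _ (by linarith) (by linarith) (by linarith) (by linarith))
      (iGs _ _ (by linarith) (by linarith) (by linarith) (by linarith))).symm
  have ssplit3 : (∫ y in (0:ℝ)..(1:ℝ), G y * Real.sin (P*y))
      = (∫ y in (0:ℝ)..h, G y * Real.sin (P*y)) + ∫ y in h..(1:ℝ), G y * Real.sin (P*y) :=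
    (intervalIntegral.integral_add_adjacent_intervals
      (iGs _ _ (by linarith) (by linarith) (by linarith) (by linarith))
      (iGs _ _ (by linarith) (by linarith) (by linarith) (by linarith))).symm
  have ssplit4 : (∫ y in (0:ℝ)..(1:ℝ), G y * Real.sin (P*y))
      = (∫ y in (0:ℝ)..(1-h), G y * Real.sin (P*y)) + ∫ y in (1-h)..(1:ℝ), G y * Real.sin (P*y) :=
    (intervalIntegral.integral_add_adjacent_intervals
      (iGs _ _ (by linarith) (by linarith) (by linarith) (by linarith))
      (iGs _ _ (by linarith) (by linarith) (by linarith) (by linarith))).symm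
  have Ssum : (∫ y in h..(1+h), G y * Real.sin (P*y)) + (∫ y in (-h)..(1-h), G y * Real.sin (P*y))
      = 2 * ∫ y in (0:ℝ)..1, G y * Real.sin (P*y) := by
    rw [ssplit1, ssplit2, even0, ← even1]
    linarith [ssplit3, ssplit4]
  have Gsin01 : (∫ y in (0:ℝ)..1, G y * Real.sin (P*y)) = ∫ x in (0:ℝ)..1, g x * Real.sin (P*x) := by
    apply intervalIntegral.integral_congr
    intro y hy
    rw [Set.uIcc_of_le (by norm_num)] at hy
    simp only
    rw [hG, Gext_eq g hy.1 hy.2]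
  -- integrability of shifted products on [0,1]
  have hint1 : IntervalIntegrable (fun x => G (x + h) * Real.cos (P * x)) volume 0 1 := by
    apply ContinuousOn.intervalIntegrable
    apply ContinuousOn.mul
    · apply hGc.comp (continuous_id.add continuous_const).continuousOn
      intro x hx
      rw [Set.uIcc_of_le (by norm_num : (0:ℝ) ≤ 1)] at hx
      exact ⟨by simp; linarith [hx.1], by simp; linarith [hx.2]⟩
    · exact (Real.continuous_cos.comp (continuous_const.mul continuous_id)).continuousOn
  have hint2 : IntervalIntegrable (fun x => G (x - h) * Real.cos (P * x)) volume 0 1 := by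
    apply ContinuousOn.intervalIntegrable
    apply ContinuousOn.mul
    · apply hGc.comp (continuous_id.sub continuous_const).continuousOn
      intro x hx
      rw [Set.uIcc_of_le (by norm_num : (0:ℝ) ≤ 1)] at hx
      exact ⟨by simp; linarith [hx.1], by simp; linarith [hx.2]⟩
    · exact (Real.continuous_cos.comp (continuous_const.mul continuous_id)).continuousOn
  have final : (∫ x in (0:ℝ)..1, (G (x + h) - G (x - h)) * Real.cos (P * x))
      = (∫ x in (0:ℝ)..1, G (x + h) * Real.cos (P * x))
        - ∫ x in (0:ℝ)..1, G (x - h) * Real.cos (P * x) := by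
    rw [← intervalIntegral.integral_sub hint1 hint2]
    apply intervalIntegral.integral_congr
    intro x _
    simp only
    ring
  rw [final, step1, step2, ccos_eq]
  rw [show Real.cos (P*h) * (∫ y in (-h)..(1-h), G y * Real.cos (P*y))
        + Real.sin (P*h) * (∫ y in h..(1+h), G y * Real.sin (P*y))
        - (Real.cos (P*h) * (∫ y in (-h)..(1-h), G y * Real.cos (P*y))
          - Real.sin (P*h) * (∫ y in (-h)..(1-h), G y * Real.sin (P*y)))
      = Real.sin (P*h) * ((∫ y in h..(1+h), G y * Real.sin (P*y))
          + (∫ y in (-h)..(1-h), G y * Real.sin (P*y))) by ring, Ssum, Gsin01]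
section mainA
variable {g : ℝ → ℝ} {H a : ℝ}
  (hH : ∀ x₁ ∈ Set.Icc (0:ℝ) 1, ∀ x₂ ∈ Set.Icc (0:ℝ) 1, |g x₁ - g x₂| ≤ H * |x₁ - x₂| ^ a)
  (ha : 0 < a) (hg0 : g 0 = 0) (hg1 : g 1 = 0)

include hH ha hg0 hg1

lemma block_l2 (j : ℕ) :
    ∑ m ∈ Finset.Ico (2^j : ℕ) (2^(j+1)), (2 * ∫ x in (0:ℝ)..1, g x * Real.sin (π * m * x))^2
      ≤ (2*H*(2*((1:ℝ)/2^(j+2)))^a)^2 := by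
  have hH0 : 0 ≤ H := holder_H_nonneg hH ha hg0 hg1
  set h : ℝ := (1:ℝ)/2^(j+2) with hh
  have hhpos : 0 < h := by positivity
  have hh14 : h ≤ 1/4 := by
    rw [hh, div_le_div_iff₀ (by positivity) (by norm_num)]
    have : (4:ℝ) ≤ 2^(j+2) := by
      calc (4:ℝ) = 2^2 := by norm_num
      _ ≤ 2^(j+2) := by apply pow_le_pow_right₀ (by norm_num); omega
    linarith
  have hhol := holder_Gext hH ha hg0 hg1
  have hGc : ContinuousOn (Gext g) (Set.Icc (-1:ℝ) 2) := contOn_of_holder ha hhol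
  set D : ℝ → ℝ := fun x => Gext g (x + h) - Gext g (x - h) with hD
  have hmem : ∀ x ∈ Set.Icc (0:ℝ) 1, (x + h) ∈ Set.Icc (-1:ℝ) 2 ∧ (x - h) ∈ Set.Icc (-1:ℝ) 2 := by
    intro x hx
    exact ⟨⟨by linarith [hx.1], by linarith [hx.2]⟩, ⟨by linarith [hx.1], by linarith [hx.2]⟩⟩
  have hDc : ContinuousOn D (Set.Icc (0:ℝ) 1) := by
    apply ContinuousOn.sub
    · apply hGc.comp (continuous_id.add continuous_const).continuousOn
      intro x hx; exact (hmem x hx).1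
    · apply hGc.comp (continuous_id.sub continuous_const).continuousOn
      intro x hx; exact (hmem x hx).2
  set M : ℝ := 2*H*(2*h)^a with hM
  have hM0 : 0 ≤ M := by
    rw [hM]; positivity
  have hDbound : ∀ x ∈ Set.Icc (0:ℝ) 1, |D x| ≤ M := by
    intro x hx
    have := hhol (x+h) (hmem x hx).1 (x-h) (hmem x hx).2
    rw [show (x + h) - (x - h) = 2*h by ring, abs_of_nonneg (show (0:ℝ) ≤ 2*h by linarith)] at this
    exact this
  have hD2 : (∫ x in (0:ℝ)..1, (D x)^2) ≤ M^2 := by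
    have hint : IntervalIntegrable (fun x => (D x)^2) volume 0 1 := by
      apply ContinuousOn.intervalIntegrable
      rw [Set.uIcc_of_le (by norm_num)]
      exact hDc.pow 2
    have := intervalIntegral.integral_mono_on (a := (0:ℝ)) (b := 1) (by norm_num)
      hint (_root_.intervalIntegrable_const (c := M^2))
      (fun x hx => by
        have h1 := hDbound x hx
        have h2 : (D x)^2 = |D x|^2 := (sq_abs _).symm
        rw [h2]
        exact pow_le_pow_left₀ (abs_nonneg _) h1 2)
    simpa using this
  -- Bessel
  set e : ℕ → ℝ → ℝ := fun k x => Real.sqrt 2 * Real.cos (π * k * x) with he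
  have hecont : ∀ k, Continuous (e k) :=
    fun k => continuous_const.mul (Real.continuous_cos.comp (continuous_const.mul continuous_id))
  have hbessel := bessel_general hDc e hecont (Finset.Ico (2^j : ℕ) (2^(j+1)))
    (fun p hp q hq => ortho_cos p q
      (by have := (Finset.mem_Ico.mp hp).1; have : 1 ≤ 2^j := Nat.one_le_two_pow; omega)
      (by have := (Finset.mem_Ico.mp hq).1; have : 1 ≤ 2^j := Nat.one_le_two_pow; omega))
  -- coefficient computation
  have hcoeff : ∀ k : ℕ, (∫ x in (0:ℝ)..1, D x * e k x)
      = Real.sqrt 2 * (Real.sin (π * k * h) * (2 * ∫ x in (0:ℝ)..1, g x * Real.sin (π * k * x))) := by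
    intro k
    have hpull : (∫ x in (0:ℝ)..1, D x * e k x)
        = Real.sqrt 2 * ∫ x in (0:ℝ)..1, D x * Real.cos (π * k * x) := by
      rw [← intervalIntegral.integral_const_mul]
      apply intervalIntegral.integral_congr
      intro x _
      simp only [he]
      ring
    rw [hpull, coeff_identity g hg0 hg1 hGc k h hhpos hh14]
  -- sin² lower bound
  have hsin : ∀ k ∈ Finset.Ico (2^j : ℕ) (2^(j+1)), (1:ℝ)/2 ≤ Real.sin (π * k * h)^2 := by
    intro k hk
    obtain ⟨hk1, hk2⟩ := Finset.mem_Ico.mp hk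
    have hcast1 : (2:ℝ)^j ≤ (k:ℝ) := by exact_mod_cast Nat.cast_le.mpr hk1
    have hcast2 : (k:ℝ) ≤ (2:ℝ)^(j+1) := by
      have : (k:ℝ) ≤ ((2^(j+1) : ℕ) : ℝ) := Nat.cast_le.mpr hk2.le
      simpa using this
    have h2j : (2:ℝ)^(j+2) = 2^j * 4 := by rw [pow_add]; norm_num
    have hθeq : π * k * h = π * k / 2^(j+2) := by rw [hh]; ring
    have hpos2 : (0:ℝ) < 2^(j+2) := by positivity
    have hp := Real.pi_pos
    have hθ1 : π/4 ≤ π * k * h := by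
      rw [hθeq, le_div_iff₀ hpos2]
      calc π/4 * 2^(j+2) = π * 2^j := by rw [h2j]; ring
      _ ≤ π * k := by nlinarith
    have hθ2 : π * k * h ≤ π/2 := by
      rw [hθeq, div_le_iff₀ hpos2]
      have h2j2 : (2:ℝ)^(j+2) = 2^(j+1) * 2 := by rw [pow_succ]
      calc π * k ≤ π * 2^(j+1) := by nlinarith
      _ = π/2 * 2^(j+2) := by rw [h2j2]; ring
    have hcos : Real.cos (2 * (π * k * h)) ≤ 0 := by
      apply Real.cos_nonpos_of_pi_div_two_le_of_le
      · linarith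
      · linarith [Real.pi_pos]
    have := Real.cos_two_mul (π * k * h)
    nlinarith [Real.sin_sq_add_cos_sq (π * k * h)]
  -- combine
  calc ∑ m ∈ Finset.Ico (2^j : ℕ) (2^(j+1)), (2 * ∫ x in (0:ℝ)..1, g x * Real.sin (π * m * x))^2
      ≤ ∑ m ∈ Finset.Ico (2^j : ℕ) (2^(j+1)), (∫ x in (0:ℝ)..1, D x * e m x)^2 := by
        apply Finset.sum_le_sum
        intro m hm
        rw [hcoeff m, mul_pow, mul_pow, Real.sq_sqrt (by norm_num : (0:ℝ) ≤ 2)]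
        have := hsin m hm
        nlinarith [sq_nonneg (2 * ∫ x in (0:ℝ)..1, g x * Real.sin (π * m * x)),
          sq_nonneg (Real.sin (π * m * h))]
    _ ≤ ∫ x in (0:ℝ)..1, (D x)^2 := hbessel
    _ ≤ M^2 := hD2
end mainA
section mainB
variable {g : ℝ → ℝ} {H a σ : ℝ}
  (hH : ∀ x₁ ∈ Set.Icc (0:ℝ) 1, ∀ x₂ ∈ Set.Icc (0:ℝ) 1, |g x₁ - g x₂| ≤ H * |x₁ - x₂| ^ a)
  (ha : 0 < a) (hg0 : g 0 = 0) (hg1 : g 1 = 0)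
include hH ha hg0 hg1
lemma block_F (hH0 : 0 ≤ H) (hσ0 : 0 ≤ σ) (j : ℕ) :
    ∑ m ∈ Finset.Ico (2^j : ℕ) (2^(j+1)),
        ((m:ℝ)^σ * |2 * ∫ x in (0:ℝ)..1, g x * Real.sin (π * m * x)|)
      ≤ (2 * (2:ℝ)^σ * H) * ((2:ℝ)^(σ + 1/2 - a))^j := by
  classical
  set s : Finset ℕ := Finset.Ico (2^j : ℕ) (2^(j+1)) with hs
  set gk : ℕ → ℝ := fun m => 2 * ∫ x in (0:ℝ)..1, g x * Real.sin (π * m * x) with hgk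
  set T : ℝ := ∑ m ∈ s, (m:ℝ)^σ * |gk m| with hT
  have hT0 : 0 ≤ T := Finset.sum_nonneg fun m _ =>
    mul_nonneg (Real.rpow_nonneg (Nat.cast_nonneg m) σ) (abs_nonneg _)
  set N : ℝ := (2:ℝ)^((j:ℝ)+1) with hN
  have hNpow : N = (2:ℝ)^(j+1 : ℕ) := by
    rw [hN, ← Real.rpow_natCast 2 (j+1)]
    push_cast
    ring_nf
  have hN0 : (0:ℝ) < N := by rw [hN]; positivity
  -- Cauchy-Schwarz
  have hcs : T^2 ≤ (∑ m ∈ s, ((m:ℝ)^σ)^2) * (∑ m ∈ s, (gk m)^2) := by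
    have := Finset.sum_mul_sq_le_sq_mul_sq s (fun m => (m:ℝ)^σ) (fun m => |gk m|)
    simp only [sq_abs] at this
    exact this
  -- bound on ∑ (m^σ)²
  have hcard : ((s.card : ℕ) : ℝ) = (2:ℝ)^(j:ℝ) := by
    have h1 : s.card = 2^j := by
      rw [hs, Nat.card_Ico, pow_succ]
      omega
    rw [h1]
    push_cast
    exact (Real.rpow_natCast 2 j).symm
  have hb1 : (∑ m ∈ s, ((m:ℝ)^σ)^2) ≤ (2:ℝ)^(j:ℝ) * (N^σ)^2 := by
    rw [← hcard]
    have := Finset.sum_le_card_nsmul s (fun m => ((m:ℝ)^σ)^2) ((N^σ)^2) ?_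
    · simpa [nsmul_eq_mul] using this
    · intro m hm
      have hm2 : (m:ℝ) ≤ N := by
        rw [hNpow]
        have : m ≤ 2^(j+1) := (Finset.mem_Ico.mp hm).2.le
        exact_mod_cast this
      exact pow_le_pow_left₀ (Real.rpow_nonneg (Nat.cast_nonneg m) σ)
        (Real.rpow_le_rpow (Nat.cast_nonneg m) hm2 hσ0) 2
  have hb2 : (∑ m ∈ s, (gk m)^2) ≤ (2*H*(2*((1:ℝ)/2^(j+2)))^a)^2 := block_l2 hH ha hg0 hg1 j
  -- rewrite M
  have hMN : 2*((1:ℝ)/2^(j+2)) = N⁻¹ := by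
    rw [hNpow]
    rw [pow_succ (2:ℝ) (j+1)]
    field_simp
  have hMrw : (2*H*(2*((1:ℝ)/2^(j+2)))^a)^2 = 4*H^2 * N^(-a) * N^(-a) := by
    have hinv : N⁻¹ ^ a = N^(-a) := by
      rw [← Real.rpow_neg_one N, ← Real.rpow_mul hN0.le]
      norm_num
    rw [hMN, hinv]
    ring
  -- exponent collection
  have hNx : ∀ x : ℝ, N^x = (2:ℝ)^(((j:ℝ)+1)*x) := by
    intro x
    rw [hN, ← Real.rpow_mul (by norm_num : (0:ℝ) ≤ 2)]
  have hsq0 : 0 ≤ ∑ m ∈ s, (gk m)^2 := Finset.sum_nonneg fun m _ => sq_nonneg _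
  have hsm0 : 0 ≤ ∑ m ∈ s, ((m:ℝ)^σ)^2 := Finset.sum_nonneg fun m _ => sq_nonneg _
  have step : T^2 ≤ 4*H^2 * (2:ℝ)^((j:ℝ) + ((j:ℝ)+1)*(σ+σ) + ((j:ℝ)+1)*(-a + -a)) := by
    calc T^2 ≤ (∑ m ∈ s, ((m:ℝ)^σ)^2) * (∑ m ∈ s, (gk m)^2) := hcs
      _ ≤ ((2:ℝ)^(j:ℝ) * (N^σ)^2) * (4*H^2 * N^(-a) * N^(-a)) := by
          apply mul_le_mul hb1 (le_trans hb2 (le_of_eq hMrw)) hsq0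
          positivity
      _ = 4*H^2 * ((2:ℝ)^(j:ℝ) * (N^σ * N^σ) * (N^(-a) * N^(-a))) := by ring
      _ = 4*H^2 * (2:ℝ)^((j:ℝ) + ((j:ℝ)+1)*(σ+σ) + ((j:ℝ)+1)*(-a + -a)) := by
          rw [← Real.rpow_add hN0, ← Real.rpow_add hN0, hNx (σ+σ), hNx (-a + -a),
            ← Real.rpow_add (by norm_num : (0:ℝ) < 2), ← Real.rpow_add (by norm_num : (0:ℝ) < 2)]
  -- RHS
  have hB0 : 0 ≤ (2 * (2:ℝ)^σ * H) * ((2:ℝ)^(σ + 1/2 - a))^j := by positivity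
  have hBrw : ((2 * (2:ℝ)^σ * H) * ((2:ℝ)^(σ + 1/2 - a))^j)^2
      = 4*H^2 * (2:ℝ)^((σ + (σ + 1/2 - a)*(j:ℝ)) + (σ + (σ + 1/2 - a)*(j:ℝ))) := by
    rw [← Real.rpow_natCast ((2:ℝ)^(σ + 1/2 - a)) j, ← Real.rpow_mul (by norm_num : (0:ℝ) ≤ 2)]
    rw [Real.rpow_add (by norm_num : (0:ℝ) < 2)]
    rw [Real.rpow_add (by norm_num : (0:ℝ) < 2)]
    ring
  apply le_of_pow_le_pow_left₀ (two_ne_zero) hB0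
  rw [hBrw]
  apply le_trans step
  apply mul_le_mul_of_nonneg_left _ (by positivity : (0:ℝ) ≤ 4*H^2)
  rw [Real.rpow_le_rpow_left_iff (by norm_num : (1:ℝ) < 2)]
  nlinarith [ha, Nat.cast_nonneg (α := ℝ) j]
end mainB

end aux

/-- Lemma 1: if `g` is Hölder of exponent `a > 1/2` on `[0,1]` with
`g(0) = g(1) = 0`, then for every `σ ∈ [0, a - 1/2)` there is a constant `C > 0`,
independent of `g`, with `∑_{k≥1} k^σ |g_k| ≤ C ‖g‖`, where
`g_k = 2∫_0^1 g(x) sin(πkx) dx`. -/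
theorem holder_sine_coeff_bound (a : ℝ) (ha : 1 / 2 < a)
    (σ : ℝ) (hσ0 : 0 ≤ σ) (hσ : σ < a - 1 / 2) :
    ∃ C > 0, ∀ (g : ℝ → ℝ) (H : ℝ),
      (∀ x₁ ∈ Set.Icc (0:ℝ) 1, ∀ x₂ ∈ Set.Icc (0:ℝ) 1,
        |g x₁ - g x₂| ≤ H * |x₁ - x₂| ^ a) →
      g 0 = 0 → g 1 = 0 →
      Summable (fun k : ℕ =>
        ((k + 1 : ℝ) ^ σ) * |2 * ∫ x in (0:ℝ)..1, g x * Real.sin (π * (k + 1) * x)|) ∧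
      (∑' k : ℕ,
        ((k + 1 : ℝ) ^ σ) * |2 * ∫ x in (0:ℝ)..1, g x * Real.sin (π * (k + 1) * x)|)
        ≤ C * H := by
  have ha0 : 0 < a := by linarith
  set ρ : ℝ := (2:ℝ)^(σ + 1/2 - a) with hρ
  have hρ0 : 0 ≤ ρ := Real.rpow_nonneg (by norm_num) _
  have hρ1 : ρ < 1 := Real.rpow_lt_one_of_one_lt_of_neg (by norm_num) (by linarith)
  have h1ρ : 0 < 1 - ρ := by linarith
  set K : ℝ := 2 * (2:ℝ)^σ with hK
  have hK0 : 0 < K := by rw [hK]; positivity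
  refine ⟨K * (1 - ρ)⁻¹, by positivity, fun g H hH hg0 hg1 => ?_⟩
  have hH0 : 0 ≤ H := holder_H_nonneg hH ha0 hg0 hg1
  set F : ℕ → ℝ := fun m => (m:ℝ)^σ * |2 * ∫ x in (0:ℝ)..1, g x * Real.sin (π * m * x)| with hF
  have hfun : (fun k : ℕ =>
      ((k + 1 : ℝ) ^ σ) * |2 * ∫ x in (0:ℝ)..1, g x * Real.sin (π * (k + 1) * x)|)
      = fun k : ℕ => F (k+1) := by
    funext k
    rw [hF]
    have hc : ((k+1:ℕ):ℝ) = (k:ℝ) + 1 := by push_cast; ring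
    simp only [hc]
  have hF0 : ∀ m, 0 ≤ F m := fun m =>
    mul_nonneg (Real.rpow_nonneg (Nat.cast_nonneg m) σ) (abs_nonneg _)
  -- dyadic bound
  have dyadic : ∀ J : ℕ, ∑ m ∈ Finset.Ico (1:ℕ) (2^J), F m ≤ (K * H) * ∑ j ∈ Finset.range J, ρ^j := by
    intro J
    induction J with
    | zero => simp
    | succ J ih =>
      have hsplit : ∑ m ∈ Finset.Ico (1:ℕ) (2^(J+1)), F m
          = (∑ m ∈ Finset.Ico (1:ℕ) (2^J), F m) + ∑ m ∈ Finset.Ico (2^J : ℕ) (2^(J+1)), F m :=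
        (Finset.sum_Ico_consecutive F Nat.one_le_two_pow
          (Nat.pow_le_pow_right (by norm_num) (by omega))).symm
      rw [hsplit, Finset.sum_range_succ, mul_add]
      apply add_le_add ih
      have := block_F hH ha0 hg0 hg1 hH0 hσ0 J
      calc ∑ m ∈ Finset.Ico (2^J : ℕ) (2^(J+1)), F m ≤ (2 * (2:ℝ)^σ * H) * ρ^J := this
        _ = K * H * ρ^J := by rw [hK]
  have key : ∀ n : ℕ, ∑ k ∈ Finset.range n, F (k+1) ≤ (K * (1-ρ)⁻¹) * H := by
    intro n
    have hre : ∑ k ∈ Finset.range n, F (k+1) = ∑ m ∈ Finset.Ico (1:ℕ) (n+1), F m := by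
      rw [Finset.sum_Ico_eq_sum_range]
      simp [add_comm]
    rw [hre]
    have hsub : ∑ m ∈ Finset.Ico (1:ℕ) (n+1), F m ≤ ∑ m ∈ Finset.Ico (1:ℕ) (2^(n+1)), F m := by
      apply Finset.sum_le_sum_of_subset_of_nonneg
      · apply Finset.Ico_subset_Ico le_rfl
        have := @Nat.lt_two_pow_self n
        calc n+1 ≤ 2^n := this
          _ ≤ 2^(n+1) := Nat.pow_le_pow_right (by norm_num) (by omega)
      · intro m _ _; exact hF0 m
    apply le_trans (le_trans hsub (dyadic (n+1)))
    have hgeom : ∑ j ∈ Finset.range (n+1), ρ^j ≤ (1-ρ)⁻¹ := by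
      have hsum : ∑' j : ℕ, ρ^j = (1-ρ)⁻¹ := tsum_geometric_of_lt_one hρ0 hρ1
      rw [← hsum]
      exact Summable.sum_le_tsum _ (fun j _ => pow_nonneg hρ0 j) (summable_geometric_of_lt_one hρ0 hρ1)
    calc K * H * ∑ j ∈ Finset.range (n+1), ρ^j ≤ K * H * (1-ρ)⁻¹ := by
          apply mul_le_mul_of_nonneg_left hgeom (by positivity)
      _ = K * (1-ρ)⁻¹ * H := by ring
  rw [hfun]
  exact ⟨summable_of_sum_range_le (fun k => hF0 (k+1)) key,
    Real.tsum_le_of_sum_range_le (fun k => hF0 (k+1)) key⟩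
end
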